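/- arXiv:1408.2693 — 3 statements merged into one kernel-verified Lean document; each statement's English description precedes it below -/
import Mathlib

section
/- Let m ≥ 1 be an integer, κ ≥ 1, q ∈ (0,1]. There exists a constant C₂ > 0, depending only on m, κ and q, with the following property. Let a = z_0 < z_1 < … < z_n = b be a partition whose element lengths h_k := z_k − z_{k−1} satisfy max(h_{k+1}/h_k, h_k/h_{k+1}) ≤ κ for all 1 ≤ k ≤ n−1. Fix j ∈ {1, …, n} and let J = [z_r, z_s] be a union of consecutive elements with r ≤ j−1 < j ≤ s, r ≥ max(j−1−m, 0) and s ≤ min(j+m, n). Suppose ψ ∈ L²(J) satisfies ‖1 − ψ‖²_{L²(J)} ≤ (1 − q)|J| and u ∈ L²([a,b]) satisfies ∫_J u(t) ψ(t) dt = 0. Then ‖u‖²_{L²(J)} ≤ C₂ |J| · Σ_{k = max(j−m, 0)}^{min(j+m−1, n)} |u|²_{H^{1/2}(ω_k)}, where ω_k := [z_{max(k−1,0)}, z_{min(k+1,n)}] denotes the node patch of z_k. -/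
open Set MeasureTheory
open scoped ENNReal NNReal

/-- Squared Sobolev–Slobodeckij seminorm `|u|_{H^{1/2}(s)}²`. -/
noncomputable def sobSemiSq (u : ℝ → ℝ) (s : Set ℝ) : ENNReal :=
  ∫⁻ x in s, ∫⁻ y in s, ENNReal.ofReal ((u x - u y) ^ 2 / (x - y) ^ 2)

/-- Squared `L²` norm `‖u‖_{L²(s)}²`. -/
noncomputable def l2Sq (u : ℝ → ℝ) (s : Set ℝ) : ENNReal :=
  ∫⁻ x in s, ENNReal.ofReal ((u x) ^ 2)

namespace LocAux

/-- Integral of the squared difference over `A × B`. -/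
noncomputable def dSq (u : ℝ → ℝ) (A B : Set ℝ) : ENNReal :=
  ∫⁻ x in A, ∫⁻ y in B, ENNReal.ofReal ((u x - u y) ^ 2)

lemma one_le_pow_real {a : ℝ} (ha : 1 ≤ a) (n : ℕ) : 1 ≤ a ^ n := by
  induction n with
  | zero => simp
  | succ n ih => rw [pow_succ]; nlinarith

lemma pow_le_pow_real {a : ℝ} (ha : 1 ≤ a) {n m : ℕ} (h : n ≤ m) : a ^ n ≤ a ^ m := by
  have ha0 : (0:ℝ) < a := lt_of_lt_of_le one_pos ha
  calc a ^ n = a ^ n * 1 := (mul_one _).symm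
    _ ≤ a ^ n * a ^ (m - n) :=
        mul_le_mul_of_nonneg_left (one_le_pow_real ha _) (by positivity)
    _ = a ^ (n + (m - n)) := (pow_add a n (m - n)).symm
    _ = a ^ m := by congr 1; omega

lemma integrable_mul {μ : Measure ℝ} {f g : ℝ → ℝ} (hf : MemLp f 2 μ) (hg : MemLp g 2 μ) :
    Integrable (fun x => f x * g x) μ := by
  refine Integrable.mono' (hf.integrable_sq.add hg.integrable_sq) (hf.1.mul hg.1) ?_
  filter_upwards with x
  simp only [Pi.add_apply, Real.norm_eq_abs, abs_mul]
  nlinarith [abs_nonneg (f x), abs_nonneg (g x), sq_abs (f x), sq_abs (g x),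
    sq_nonneg (|f x| - |g x|)]

lemma cauchy_schwarz {μ : Measure ℝ} [IsFiniteMeasure μ] {f g : ℝ → ℝ}
    (hf : MemLp f 2 μ) (hg : MemLp g 2 μ) :
    (∫ x, f x * g x ∂μ) ^ 2 ≤ (∫ x, f x ^ 2 ∂μ) * (∫ x, g x ^ 2 ∂μ) := by
  set A := ∫ x, f x ^ 2 ∂μ with hAdef
  set B := ∫ x, f x * g x ∂μ with hBdef
  set C := ∫ x, g x ^ 2 ∂μ with hCdef
  have hA : 0 ≤ A := integral_nonneg fun x => sq_nonneg _
  have hC : 0 ≤ C := integral_nonneg fun x => sq_nonneg _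
  have key : ∀ t : ℝ, 0 ≤ A - 2 * t * B + t ^ 2 * C := by
    intro t
    have h0 : 0 ≤ ∫ x, (f x - t * g x) ^ 2 ∂μ := integral_nonneg fun x => sq_nonneg _
    have hfun : (fun x => (f x - t * g x) ^ 2)
        = fun x => (f x ^ 2 - 2 * t * (f x * g x)) + t ^ 2 * g x ^ 2 := by
      funext x; ring
    have i1 : Integrable (fun x => f x ^ 2 - 2 * t * (f x * g x)) μ := by
      exact hf.integrable_sq.sub ((integrable_mul hf hg).const_mul _)
    have i2 : Integrable (fun x => t ^ 2 * g x ^ 2) μ := by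
      exact hg.integrable_sq.const_mul _
    have i3 : Integrable (fun x => 2 * t * (f x * g x)) μ := by
      exact (integrable_mul hf hg).const_mul _
    rw [hfun, integral_add i1 i2, integral_sub hf.integrable_sq i3,
      integral_const_mul, integral_const_mul] at h0
    linarith
  have hd := discrim_le_zero (a := C) (b := -2 * B) (c := A)
    (fun x => by nlinarith [key x])
  rw [discrim] at hd
  nlinarith

lemma sob_pair_le (u : ℝ → ℝ) {A B s : Set ℝ} (hAs : A ⊆ s) (hBs : B ⊆ s) :
    (∫⁻ x in A, ∫⁻ y in B, ENNReal.ofReal ((u x - u y) ^ 2 / (x - y) ^ 2))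
      ≤ sobSemiSq u s :=
  lintegral_mono' (Measure.restrict_mono hAs le_rfl)
    fun _ => lintegral_mono' (Measure.restrict_mono hBs le_rfl) le_rfl

lemma ratio_le_dSq (u : ℝ → ℝ) {A B : Set ℝ} (hA : MeasurableSet A) (hB : MeasurableSet B)
    {g : ℝ} (hg : 0 < g) (hgap : ∀ x ∈ A, ∀ y ∈ B, g ^ 2 ≤ (x - y) ^ 2) :
    (∫⁻ x in A, ∫⁻ y in B, ENNReal.ofReal ((u x - u y) ^ 2 / (x - y) ^ 2))
      ≤ ENNReal.ofReal (1 / g ^ 2) * dSq u A B := by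
  rw [dSq, ← lintegral_const_mul' _ _ ENNReal.ofReal_ne_top]
  refine setLIntegral_mono' hA fun x hx => ?_
  rw [← lintegral_const_mul' _ _ ENNReal.ofReal_ne_top]
  refine setLIntegral_mono' hB fun y hy => ?_
  rw [← ENNReal.ofReal_mul (by positivity)]
  refine ENNReal.ofReal_le_ofReal ?_
  have h1 : (u x - u y) ^ 2 / (x - y) ^ 2 ≤ (u x - u y) ^ 2 / g ^ 2 :=
    div_le_div_of_nonneg_left (sq_nonneg _) (by positivity) (hgap x hx y hy)
  calc (u x - u y) ^ 2 / (x - y) ^ 2 ≤ (u x - u y) ^ 2 / g ^ 2 := h1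
    _ = 1 / g ^ 2 * (u x - u y) ^ 2 := by ring

lemma dSq_le_sob (u : ℝ → ℝ) {A B s : Set ℝ} (hA : MeasurableSet A) (hB : MeasurableSet B)
    (hAs : A ⊆ s) (hBs : B ⊆ s) {L : ℝ}
    (hL : ∀ x ∈ s, ∀ y ∈ s, (x - y) ^ 2 ≤ L ^ 2) :
    dSq u A B ≤ ENNReal.ofReal (L ^ 2) * sobSemiSq u s := by
  have step : dSq u A B ≤ ENNReal.ofReal (L ^ 2) *
      ∫⁻ x in A, ∫⁻ y in B, ENNReal.ofReal ((u x - u y) ^ 2 / (x - y) ^ 2) := by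
    rw [dSq, ← lintegral_const_mul' _ _ ENNReal.ofReal_ne_top]
    refine setLIntegral_mono' hA fun x hx => ?_
    rw [← lintegral_const_mul' _ _ ENNReal.ofReal_ne_top]
    refine setLIntegral_mono' hB fun y hy => ?_
    rcases eq_or_ne x y with rfl | hxy
    · simp
    rw [← ENNReal.ofReal_mul (by positivity)]
    refine ENNReal.ofReal_le_ofReal ?_
    have hxyne : x - y ≠ 0 := sub_ne_zero.mpr hxy
    calc (u x - u y) ^ 2
        = (u x - u y) ^ 2 / (x - y) ^ 2 * (x - y) ^ 2 :=
          (div_mul_cancel₀ _ (pow_ne_zero 2 hxyne)).symm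
      _ ≤ (u x - u y) ^ 2 / (x - y) ^ 2 * L ^ 2 :=
          mul_le_mul_of_nonneg_left (hL x (hAs hx) y (hBs hy)) (by positivity)
      _ = L ^ 2 * ((u x - u y) ^ 2 / (x - y) ^ 2) := mul_comm _ _
  exact step.trans (mul_le_mul_right (sob_pair_le u hAs hBs) _)

lemma dSq_avg (u : ℝ → ℝ) (hu : Measurable u) (A B C : Set ℝ)
    (hC0 : volume C ≠ 0) (hCt : volume C ≠ ⊤) (hBt : volume B ≠ ⊤) :
    dSq u A B ≤ (volume C)⁻¹ * 2 *
      (volume B * dSq u A C + volume A * dSq u C B) := by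
  set f : ℝ → ℝ → ℝ≥0∞ := fun x y => ENNReal.ofReal ((u x - u y) ^ 2) with hf
  have hCinv : (volume C)⁻¹ ≠ ⊤ := by simp [hC0]
  have hfm : ∀ x : ℝ, Measurable fun ξ => f x ξ := fun x =>
    ENNReal.measurable_ofReal.comp (((measurable_const.sub hu).pow_const 2))
  have hfm' : ∀ y : ℝ, Measurable fun ξ => f ξ y := fun y =>
    ENNReal.measurable_ofReal.comp (((hu.sub measurable_const).pow_const 2))
  have key : ∀ x y : ℝ, f x y ≤ (volume C)⁻¹ *
      ∫⁻ ξ in C, (2 * f x ξ + 2 * f ξ y) := by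
    intro x y
    have h1 : volume C * f x y ≤ ∫⁻ ξ in C, (2 * f x ξ + 2 * f ξ y) := by
      rw [mul_comm, ← setLIntegral_const C (f x y)]
      refine lintegral_mono fun ξ => ?_
      have hre : (u x - u y) ^ 2 ≤ 2 * (u x - u ξ) ^ 2 + 2 * (u ξ - u y) ^ 2 := by
        nlinarith [sq_nonneg (u x + u y - 2 * u ξ)]
      calc f x y ≤ ENNReal.ofReal (2 * (u x - u ξ) ^ 2 + 2 * (u ξ - u y) ^ 2) :=
            ENNReal.ofReal_le_ofReal hre
        _ = 2 * f x ξ + 2 * f ξ y := by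
            rw [ENNReal.ofReal_add (by positivity) (by positivity),
              ENNReal.ofReal_mul (by norm_num), ENNReal.ofReal_mul (by norm_num),
              ENNReal.ofReal_ofNat]
    calc f x y = (volume C)⁻¹ * (volume C * f x y) := by
          rw [← mul_assoc, ENNReal.inv_mul_cancel hC0 hCt, one_mul]
      _ ≤ _ := mul_le_mul_right h1 _
  have step1 : dSq u A B ≤ (volume C)⁻¹ *
      ∫⁻ x in A, ∫⁻ y in B, ∫⁻ ξ in C, (2 * f x ξ + 2 * f ξ y) := by
    calc dSq u A B ≤ ∫⁻ x in A, ∫⁻ y in B,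
          (volume C)⁻¹ * ∫⁻ ξ in C, (2 * f x ξ + 2 * f ξ y) :=
        lintegral_mono fun x => lintegral_mono fun y => key x y
      _ = _ := by
        simp_rw [lintegral_const_mul' ((volume C)⁻¹) _ hCinv]
  refine step1.trans ?_
  rw [mul_assoc ((volume C)⁻¹) 2]
  refine mul_le_mul_right ?_ _
  have hinner : ∀ x y : ℝ, (∫⁻ ξ in C, (2 * f x ξ + 2 * f ξ y))
      = (∫⁻ ξ in C, 2 * f x ξ) + ∫⁻ ξ in C, 2 * f ξ y := fun x y =>
    lintegral_add_left ((hfm x).const_mul 2) _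
  calc (∫⁻ x in A, ∫⁻ y in B, ∫⁻ ξ in C, (2 * f x ξ + 2 * f ξ y))
      = ∫⁻ x in A, ((∫⁻ y in B, (∫⁻ ξ in C, 2 * f x ξ)) +
          ∫⁻ y in B, ∫⁻ ξ in C, 2 * f ξ y) := by
        refine lintegral_congr fun x => ?_
        rw [← lintegral_add_left measurable_const]
        exact lintegral_congr fun y => hinner x y
    _ = (∫⁻ x in A, (∫⁻ ξ in C, 2 * f x ξ) * volume B) +
          volume A * ∫⁻ y in B, ∫⁻ ξ in C, 2 * f ξ y := by
        rw [lintegral_add_right _ measurable_const, lintegral_const,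
          Measure.restrict_apply_univ]
        congr 1
        · exact lintegral_congr fun x => by
            rw [setLIntegral_const]
        · rw [mul_comm]
    _ ≤ 2 * (volume B * dSq u A C + volume A * dSq u C B) := by
        have e1 : (∫⁻ x in A, (∫⁻ ξ in C, 2 * f x ξ) * volume B)
            = 2 * (volume B * dSq u A C) := by
          simp_rw [lintegral_const_mul' 2 _ (by norm_num : (2:ℝ≥0∞) ≠ ⊤)]
          rw [lintegral_mul_const' _ _ hBt, lintegral_const_mul' 2 _ (by norm_num)]
          rw [dSq]; ring
        have e2 : (∫⁻ y in B, ∫⁻ ξ in C, 2 * f ξ y) = 2 * dSq u C B := by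
          simp_rw [lintegral_const_mul' 2 _ (by norm_num : (2:ℝ≥0∞) ≠ ⊤)]
          congr 1
          rw [dSq, lintegral_lintegral_swap]
          exact (ENNReal.measurable_ofReal.comp
            (((hu.comp measurable_snd).sub (hu.comp measurable_fst)).pow_const 2)).aemeasurable
        rw [e1, e2]
        ring_nf
        exact le_rfl

lemma lintegral_Icc_le_sum (z : ℕ → ℝ) (f : ℝ → ℝ≥0∞) (r : ℕ) :
    ∀ s, r ≤ s → (∫⁻ x in Icc (z r) (z s), f x)
      ≤ ∑ p ∈ Finset.Icc (r + 1) s, ∫⁻ x in Icc (z (p - 1)) (z p), f x := by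
  intro s hs
  induction s with
  | zero =>
    have : r = 0 := Nat.le_zero.mp hs
    subst this
    simp [Set.Icc_self, setLIntegral_measure_zero _ _ Real.volume_singleton]
  | succ s ih =>
    rcases Nat.lt_or_ge r (s + 1) with h | h
    · have hrs : r ≤ s := by omega
      have hsub : Icc (z r) (z (s + 1)) ⊆ Icc (z r) (z s) ∪ Icc (z s) (z (s + 1)) := by
        intro x hx
        rcases le_or_gt x (z s) with h' | h'
        · exact Or.inl ⟨hx.1, h'⟩
        · exact Or.inr ⟨h'.le, hx.2⟩
      calc (∫⁻ x in Icc (z r) (z (s + 1)), f x)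
          ≤ ∫⁻ x in Icc (z r) (z s) ∪ Icc (z s) (z (s + 1)), f x :=
            lintegral_mono' (Measure.restrict_mono hsub le_rfl) le_rfl
        _ ≤ (∫⁻ x in Icc (z r) (z s), f x) + ∫⁻ x in Icc (z s) (z (s + 1)), f x :=
            lintegral_union_le _ _ _
        _ ≤ (∑ p ∈ Finset.Icc (r + 1) s, ∫⁻ x in Icc (z (p - 1)) (z p), f x)
              + ∫⁻ x in Icc (z s) (z (s + 1)), f x := by
            exact add_le_add_left (ih hrs) _
        _ = ∑ p ∈ Finset.Icc (r + 1) (s + 1), ∫⁻ x in Icc (z (p - 1)) (z p), f x := by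
            rw [Finset.sum_Icc_succ_top (by omega : r + 1 ≤ s + 1)]
            simp
    · have : r = s + 1 := by omega
      subst this
      simp [Set.Icc_self, setLIntegral_measure_zero _ _ Real.volume_singleton]

lemma sum_telescope (z : ℕ → ℝ) (r : ℕ) :
    ∀ s, r ≤ s → ∑ p ∈ Finset.Icc (r + 1) s, (z p - z (p - 1)) = z s - z r := by
  intro s hs
  induction s with
  | zero =>
    have : r = 0 := Nat.le_zero.mp hs
    subst this; simp
  | succ s ih =>
    rcases Nat.lt_or_ge r (s + 1) with h | h
    · have hrs : r ≤ s := by omega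
      rw [Finset.sum_Icc_succ_top (by omega : r + 1 ≤ s + 1), ih hrs]
      simp only [Nat.add_sub_cancel]
      ring
    · have : r = s + 1 := by omega
      subst this; simp

end LocAux

set_option maxHeartbeats 4000000 in
/-- Lemma 3.5 (case `m > 0`): orthogonality of `u` against a bump function on a
patch `J = [z_r, z_s]` of at most `m` layers around the element `[z_{j-1}, z_j]`
yields a local `L²`-bound by the neighbouring node-patch seminorms. -/
theorem local_l2_bound_by_patch_seminorms
    (m : ℕ) (hm : 1 ≤ m) (κ : ℝ) (hκ : 1 ≤ κ) (q : ℝ) (hq0 : 0 < q) (hq1 : q ≤ 1) :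
    ∃ C₂ : ℝ, 0 < C₂ ∧
      ∀ (a b : ℝ) (n : ℕ) (z : ℕ → ℝ),
        1 ≤ n → z 0 = a → z n = b →
        (∀ k < n, z k < z (k + 1)) →
        (∀ k, 1 ≤ k → k < n →
          (z (k + 1) - z k) / (z k - z (k - 1)) ≤ κ ∧
          (z k - z (k - 1)) / (z (k + 1) - z k) ≤ κ) →
        ∀ j, 1 ≤ j → j ≤ n →
        ∀ r s : ℕ, r ≤ j - 1 → j ≤ s → j - 1 - m ≤ r → s ≤ min (j + m) n →
        ∀ ψ : ℝ → ℝ, MemLp ψ 2 (volume.restrict (Icc (z r) (z s))) →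
          l2Sq (fun t => 1 - ψ t) (Icc (z r) (z s))
            ≤ ENNReal.ofReal ((1 - q) * (z s - z r)) →
        ∀ u : ℝ → ℝ, MemLp u 2 (volume.restrict (Icc a b)) →
          (∫ t in Icc (z r) (z s), u t * ψ t) = 0 →
          l2Sq u (Icc (z r) (z s))
            ≤ ENNReal.ofReal (C₂ * (z s - z r)) *
                ∑ k ∈ Finset.Icc (j - m) (min (j + m - 1) n),
                  sobSemiSq u (Icc (z (k - 1)) (z (min (k + 1) n))) := by
  classical
  have hκ0 : (0:ℝ) < κ := lt_of_lt_of_le one_pos hκ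
  have hκpow : (1:ℝ) ≤ κ ^ (2 * m) := LocAux.one_le_pow_real hκ _
  set Λ : ℝ := (2 * (m:ℝ) + 1) * κ ^ (2 * m) with hΛdef
  have hm1 : (1:ℝ) ≤ 2 * (m:ℝ) + 1 := by
    have : (0:ℝ) ≤ (m:ℝ) := Nat.cast_nonneg m
    linarith
  have hΛ1 : 1 ≤ Λ := by nlinarith
  have hΛ0 : 0 < Λ := lt_of_lt_of_le one_pos hΛ1
  set c0 : ℝ := Λ ^ 2 * (4 * Λ) ^ (2 * m) * (1 + κ) ^ 2 + 1 with hc0def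
  have hc0_1 : 1 ≤ c0 := by
    have hX : (0:ℝ) ≤ Λ ^ 2 * (4 * Λ) ^ (2 * m) * (1 + κ) ^ 2 := by positivity
    rw [hc0def]; linarith
  have hc0_0 : 0 < c0 := lt_of_lt_of_le one_pos hc0_1
  set c1 : ℝ := (2 * (m:ℝ) + 1) ^ 2 * c0 with hc1def
  have hc1_0 : 0 < c1 := by
    have hsq : (1:ℝ) ≤ (2 * (m:ℝ) + 1) ^ 2 := by nlinarith
    rw [hc1def]; nlinarith
  refine ⟨c1 / (2 * q), div_pos hc1_0 (by linarith), ?_⟩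
  intro a b n z hn hz0 hzn hlt hrat j hj1 hjn r s hrj hjs hrm hsm ψ hψ hψq u hu horth
  -- index facts
  have hsn : s ≤ n := le_trans hsm (min_le_right _ _)
  have hsjm : s ≤ j + m := le_trans hsm (min_le_left _ _)
  have hrs : r < s := by omega
  have hsr : s - r ≤ 2 * m + 1 := by omega
  -- monotonicity of z
  have hle : ∀ k, k < n → z k ≤ z (k + 1) := fun k h => (hlt k h).le
  have hmono : ∀ i k, i ≤ k → k ≤ n → z i ≤ z k := by
    intro i k hik hkn
    induction k with
    | zero =>
      have : i = 0 := by omega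
      rw [this]
    | succ k ih =>
      rcases Nat.lt_or_ge i (k + 1) with h | h
      · exact le_trans (ih (by omega) (by omega)) (hle k (by omega))
      · have : i = k + 1 := by omega
        rw [this]
  have hstrict : ∀ i k, i < k → k ≤ n → z i < z k := by
    intro i k hik hkn
    have h2 := hlt (k - 1) (by omega)
    rw [Nat.sub_add_cancel (by omega : 1 ≤ k)] at h2
    exact lt_of_le_of_lt (hmono i (k - 1) (by omega) (by omega)) h2
  have hJpos : 0 < z s - z r := sub_pos.mpr (hstrict r s hrs hsn)
  set JL : ℝ := z s - z r with hJLdef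
  -- local element sizes
  have hpos : ∀ k, 1 ≤ k → k ≤ n → 0 < z k - z (k - 1) := by
    intro k h1 h2; exact sub_pos.mpr (hstrict (k - 1) k (by omega) h2)
  have hup : ∀ k, 1 ≤ k → k < n → z (k + 1) - z k ≤ κ * (z k - z (k - 1)) := by
    intro k h1 h2
    have h3 := (hrat k h1 h2).1
    have hp := hpos k h1 (by omega)
    rw [div_le_iff₀ hp] at h3
    linarith
  have hdown : ∀ k, 1 ≤ k → k < n → z k - z (k - 1) ≤ κ * (z (k + 1) - z k) := by
    intro k h1 h2
    have h3 := (hrat k h1 h2).2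
    have hp : 0 < z (k + 1) - z k := sub_pos.mpr (hlt k h2)
    rw [div_le_iff₀ hp] at h3
    linarith
  have hcomp_up : ∀ k d, 1 ≤ k → k + d ≤ n →
      z (k + d) - z (k + d - 1) ≤ κ ^ d * (z k - z (k - 1)) := by
    intro k d
    induction d with
    | zero => intro h1 h2; simpa using le_rfl
    | succ d ih =>
      intro h1 h2
      have hd := ih h1 (by omega)
      have hstep := hup (k + d) (by omega) (by omega)
      calc z (k + (d + 1)) - z (k + (d + 1) - 1) = z ((k + d) + 1) - z (k + d) := by
            congr 2 <;> omega
        _ ≤ κ * (z (k + d) - z (k + d - 1)) := hstep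
        _ ≤ κ * (κ ^ d * (z k - z (k - 1))) := mul_le_mul_of_nonneg_left hd (by positivity)
        _ = κ ^ (d + 1) * (z k - z (k - 1)) := by ring
  have hcomp_down : ∀ k d, 1 ≤ k → k + d ≤ n →
      z k - z (k - 1) ≤ κ ^ d * (z (k + d) - z (k + d - 1)) := by
    intro k d
    induction d with
    | zero => intro h1 h2; simpa using le_rfl
    | succ d ih =>
      intro h1 h2
      have hd := ih h1 (by omega)
      have hstep := hdown (k + d) (by omega) (by omega)
      have h5 : z (k + d) - z (k + d - 1) ≤ κ * (z (k + (d + 1)) - z (k + (d + 1) - 1)) := by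
        have he : z ((k + d) + 1) - z (k + d) = z (k + (d + 1)) - z (k + (d + 1) - 1) := by
          congr 2 <;> omega
        rw [← he]; exact hstep
      calc z k - z (k - 1) ≤ κ ^ d * (z (k + d) - z (k + d - 1)) := hd
        _ ≤ κ ^ d * (κ * (z (k + (d + 1)) - z (k + (d + 1) - 1))) :=
            mul_le_mul_of_nonneg_left h5 (by positivity)
        _ = κ ^ (d + 1) * (z (k + (d + 1)) - z (k + (d + 1) - 1)) := by ring
  have hcompJ : ∀ i k, r + 1 ≤ i → i ≤ s → r + 1 ≤ k → k ≤ s →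
      z i - z (i - 1) ≤ κ ^ (2 * m) * (z k - z (k - 1)) := by
    intro i k hi1 hi2 hk1 hk2
    have hkpos := hpos k (by omega) (by omega)
    rcases le_or_gt i k with h | h
    · have h4 := hcomp_down i (k - i) (by omega) (by omega)
      have he : i + (k - i) = k := by omega
      rw [he] at h4
      calc z i - z (i - 1) ≤ κ ^ (k - i) * (z k - z (k - 1)) := h4
        _ ≤ κ ^ (2 * m) * (z k - z (k - 1)) :=
            mul_le_mul_of_nonneg_right (LocAux.pow_le_pow_real hκ (by omega)) hkpos.le
    · have h4 := hcomp_up k (i - k) (by omega) (by omega)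
      have he : k + (i - k) = i := by omega
      rw [he] at h4
      calc z i - z (i - 1) ≤ κ ^ (i - k) * (z k - z (k - 1)) := h4
        _ ≤ κ ^ (2 * m) * (z k - z (k - 1)) :=
            mul_le_mul_of_nonneg_right (LocAux.pow_le_pow_real hκ (by omega)) hkpos.le
  have hJle : ∀ k, r + 1 ≤ k → k ≤ s → JL ≤ Λ * (z k - z (k - 1)) := by
    intro k hk1 hk2
    have hkpos := hpos k (by omega) (by omega)
    have hcast : ((s - r : ℕ) : ℝ) ≤ 2 * (m:ℝ) + 1 := by
      have := (Nat.cast_le (α := ℝ)).mpr hsr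
      push_cast at this
      linarith
    calc JL = ∑ p ∈ Finset.Icc (r + 1) s, (z p - z (p - 1)) :=
          (LocAux.sum_telescope z r s (by omega)).symm
      _ ≤ ∑ p ∈ Finset.Icc (r + 1) s, κ ^ (2 * m) * (z k - z (k - 1)) := by
          refine Finset.sum_le_sum fun p hp => ?_
          have hp' := Finset.mem_Icc.mp hp
          exact hcompJ p k hp'.1 hp'.2 hk1 hk2
      _ = ((s - r : ℕ) : ℝ) * (κ ^ (2 * m) * (z k - z (k - 1))) := by
          rw [Finset.sum_const, Nat.card_Icc]
          have he : s + 1 - (r + 1) = s - r := by omega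
          rw [he, nsmul_eq_mul]
      _ ≤ (2 * (m:ℝ) + 1) * (κ ^ (2 * m) * (z k - z (k - 1))) := by
          refine mul_le_mul_of_nonneg_right hcast ?_
          positivity
      _ = Λ * (z k - z (k - 1)) := by rw [hΛdef]; ring
  set J : Set ℝ := Icc (z r) (z s) with hJdef
  have haz : a ≤ z r := by rw [← hz0]; exact hmono 0 r (by omega) (by omega)
  have hzb : z s ≤ b := by rw [← hzn]; exact hmono s n hsn le_rfl
  have hJab : J ⊆ Icc a b := Icc_subset_Icc haz hzb
  -- measurable representative
  set u' : ℝ → ℝ := hu.1.mk u with hu'def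
  have hum : Measurable u' := hu.1.stronglyMeasurable_mk.measurable
  have huu' : u =ᵐ[volume.restrict (Icc a b)] u' := hu.1.ae_eq_mk
  have hcong : ∀ ω : Set ℝ, ω ⊆ Icc a b → sobSemiSq u ω = sobSemiSq u' ω := by
    intro ω hω
    have hae : ∀ᵐ x ∂(volume.restrict ω), u x = u' x :=
      ae_restrict_of_ae_restrict_of_subset hω huu'
    refine lintegral_congr_ae ?_
    filter_upwards [hae] with x hx
    refine lintegral_congr_ae ?_
    filter_upwards [hae] with y hy
    rw [hx, hy]
  have haeJ : ∀ᵐ x ∂(volume.restrict J), u x = u' x :=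
    ae_restrict_of_ae_restrict_of_subset hJab huu'
  have hl2e : l2Sq u J = l2Sq u' J := by
    refine lintegral_congr_ae ?_
    filter_upwards [haeJ] with x hx; rw [hx]
  have hu2' : MemLp u' 2 (volume.restrict (Icc a b)) := (memLp_congr_ae huu').mp hu
  have horth' : (∫ t in J, u' t * ψ t) = 0 := by
    rw [← horth]
    refine integral_congr_ae ?_
    filter_upwards [haeJ] with x hx; rw [hx]
  rw [hl2e]
  have hgoalsum : ∑ k ∈ Finset.Icc (j - m) (min (j + m - 1) n),
      sobSemiSq u (Icc (z (k - 1)) (z (min (k + 1) n)))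
      = ∑ k ∈ Finset.Icc (j - m) (min (j + m - 1) n),
        sobSemiSq u' (Icc (z (k - 1)) (z (min (k + 1) n))) := by
    refine Finset.sum_congr rfl fun k hk => ?_
    have hk' := Finset.mem_Icc.mp hk
    have hkn : k ≤ n := le_trans hk'.2 (min_le_right _ _)
    refine hcong _ (Icc_subset_Icc ?_ ?_)
    · rw [← hz0]; exact hmono 0 (k - 1) (by omega) (by omega)
    · rw [← hzn]; exact hmono (min (k + 1) n) n (by omega) le_rfl
  rw [hgoalsum]
  set Ssum : ℝ≥0∞ := ∑ k ∈ Finset.Icc (j - m) (min (j + m - 1) n),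
      sobSemiSq u' (Icc (z (k - 1)) (z (min (k + 1) n))) with hSdef
  -- diameter bound for patches
  have hdiam : ∀ k, r + 1 ≤ k → k ≤ s →
      ∀ x ∈ Icc (z (k - 1)) (z (min (k + 1) n)), ∀ y ∈ Icc (z (k - 1)) (z (min (k + 1) n)),
        (x - y) ^ 2 ≤ ((1 + κ) * JL) ^ 2 := by
    intro k hk1 hk2 x hx y hy
    have hksize : z k - z (k - 1) ≤ JL := by
      rw [hJLdef]
      exact sub_le_sub (hmono k s hk2 hsn) (hmono r (k - 1) (by omega) (by omega))
    have hκJL : (0:ℝ) ≤ κ * JL := mul_nonneg hκ0.le hJpos.le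
    have hlen : z (min (k + 1) n) - z (k - 1) ≤ (1 + κ) * JL := by
      rcases le_or_gt (k + 1) n with h | h
      · rw [min_eq_left h]
        have hnext := hup k (by omega) (by omega)
        have h2 : κ * (z k - z (k - 1)) ≤ κ * JL :=
          mul_le_mul_of_nonneg_left hksize hκ0.le
        linarith
      · have he : min (k + 1) n = n := min_eq_right (by omega)
        have hkn : k = n := by omega
        rw [he, ← hkn]
        linarith
    have h1 : x - y ≤ (1 + κ) * JL := by
      have := hx.2; have := hy.1; linarith
    have h2 : -((1 + κ) * JL) ≤ x - y := by
      have := hx.1; have := hy.2; linarith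
    exact sq_le_sq' h2 h1
  -- patch selection
  have hpatch : ∀ p t, r + 1 ≤ p → p ≤ s → r + 1 ≤ t → t ≤ s → t ≤ p + 1 → p ≤ t + 1 →
      ∃ k, k ∈ Finset.Icc (j - m) (min (j + m - 1) n) ∧ r + 1 ≤ k ∧ k ≤ s ∧
        Icc (z (p - 1)) (z p) ⊆ Icc (z (k - 1)) (z (min (k + 1) n)) ∧
        Icc (z (t - 1)) (z t) ⊆ Icc (z (k - 1)) (z (min (k + 1) n)) := by
    intro p t hp1 hp2 ht1 ht2 htp hpt
    by_cases hc : min p t ≤ j + m - 1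
    · refine ⟨min p t, Finset.mem_Icc.mpr ⟨by omega, by omega⟩, by omega, by omega,
        Icc_subset_Icc ?_ ?_, Icc_subset_Icc ?_ ?_⟩
      · exact hmono (min p t - 1) (p - 1) (by omega) (by omega)
      · exact hmono p (min (min p t + 1) n) (by omega) (by omega)
      · exact hmono (min p t - 1) (t - 1) (by omega) (by omega)
      · exact hmono t (min (min p t + 1) n) (by omega) (by omega)
    · have hps : p = s := by omega
      have hts : t = s := by omega
      have hs2 : r + 2 ≤ s := by omega
      refine ⟨s - 1, Finset.mem_Icc.mpr ⟨by omega, by omega⟩, by omega, by omega,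
        Icc_subset_Icc ?_ ?_, Icc_subset_Icc ?_ ?_⟩
      · exact hmono (s - 1 - 1) (p - 1) (by omega) (by omega)
      · exact hmono p (min (s - 1 + 1) n) (by omega) (by omega)
      · exact hmono (s - 1 - 1) (t - 1) (by omega) (by omega)
      · exact hmono t (min (s - 1 + 1) n) (by omega) (by omega)
  -- measurability of inner seminorm integrals
  have hratm : ∀ A : Set ℝ, Measurable fun x => ∫⁻ y in A,
      ENNReal.ofReal ((u' x - u' y) ^ 2 / (x - y) ^ 2) := by
    intro A
    have hf : Measurable fun p : ℝ × ℝ =>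
        ENNReal.ofReal ((u' p.1 - u' p.2) ^ 2 / (p.1 - p.2) ^ 2) :=
      ENNReal.measurable_ofReal.comp
        ((((hum.comp measurable_fst).sub (hum.comp measurable_snd)).pow_const 2).div
          ((measurable_fst.sub measurable_snd).pow_const 2))
    exact hf.lintegral_prod_right'
  -- base estimate for adjacent elements
  have hbase : ∀ p t, r + 1 ≤ p → p ≤ s → r + 1 ≤ t → t ≤ s → t ≤ p + 1 → p ≤ t + 1 →
      LocAux.dSq u' (Icc (z (p - 1)) (z p)) (Icc (z (t - 1)) (z t))
        ≤ ENNReal.ofReal (((1 + κ) * JL) ^ 2) * Ssum := by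
    intro p t hp1 hp2 ht1 ht2 htp hpt
    obtain ⟨k, hkmem, hk1, hk2, hsub1, hsub2⟩ := hpatch p t hp1 hp2 ht1 ht2 htp hpt
    have hsingle : sobSemiSq u' (Icc (z (k - 1)) (z (min (k + 1) n))) ≤ Ssum := by
      rw [hSdef]
      exact Finset.single_le_sum
        (f := fun i => sobSemiSq u' (Icc (z (i - 1)) (z (min (i + 1) n))))
        (fun i _ => zero_le) hkmem
    exact (LocAux.dSq_le_sob u' measurableSet_Icc measurableSet_Icc hsub1 hsub2
      (hdiam k hk1 hk2)).trans (mul_le_mul_right hsingle _)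
  -- volume estimates
  have hvolTop : ∀ p : ℕ, volume (Icc (z (p - 1)) (z p)) ≠ ⊤ := fun p => by
    rw [Real.volume_Icc]; exact ENNReal.ofReal_ne_top
  have hvolle : ∀ p, r + 1 ≤ p → p ≤ s →
      volume (Icc (z (p - 1)) (z p)) ≤ ENNReal.ofReal JL := by
    intro p hp1 hp2
    rw [Real.volume_Icc]
    refine ENNReal.ofReal_le_ofReal ?_
    rw [hJLdef]
    exact sub_le_sub (hmono p s hp2 hsn) (hmono r (p - 1) (by omega) (by omega))
  have hvolinv : ∀ p, r + 1 ≤ p → p ≤ s →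
      (volume (Icc (z (p - 1)) (z p)))⁻¹ ≤ ENNReal.ofReal (Λ / JL) := by
    intro p hp1 hp2
    have hppos := hpos p (by omega) (by omega)
    rw [Real.volume_Icc, ← ENNReal.ofReal_inv_of_pos hppos]
    refine ENNReal.ofReal_le_ofReal ?_
    rw [inv_eq_one_div, div_le_div_iff₀ hppos hJpos]
    have h5 := hJle p hp1 hp2
    linarith
  have hvol0 : ∀ p, r + 1 ≤ p → p ≤ s → volume (Icc (z (p - 1)) (z p)) ≠ 0 := by
    intro p hp1 hp2
    rw [Real.volume_Icc]
    exact (ENNReal.ofReal_pos.mpr (hpos p (by omega) (by omega))).ne'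
  -- collection identity for the induction step
  have hcollect : ∀ d : ℕ,
      ENNReal.ofReal (Λ / JL) * 2 *
        (ENNReal.ofReal JL * (ENNReal.ofReal ((4 * Λ) ^ d * ((1 + κ) * JL) ^ 2) * Ssum)
          + ENNReal.ofReal JL * (ENNReal.ofReal ((4 * Λ) ^ d * ((1 + κ) * JL) ^ 2) * Ssum))
        = ENNReal.ofReal ((4 * Λ) ^ (d + 1) * ((1 + κ) * JL) ^ 2) * Ssum := by
    intro d
    have hco : ENNReal.ofReal (Λ / JL) * (2 * 2) *
        (ENNReal.ofReal JL * ENNReal.ofReal ((4 * Λ) ^ d * ((1 + κ) * JL) ^ 2))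
        = ENNReal.ofReal ((4 * Λ) ^ (d + 1) * ((1 + κ) * JL) ^ 2) := by
      rw [← ENNReal.ofReal_mul hJpos.le]
      rw [show ((2:ℝ≥0∞) * 2) = ENNReal.ofReal (4:ℝ) by
        rw [ENNReal.ofReal_ofNat]; norm_num]
      rw [← ENNReal.ofReal_mul (div_nonneg hΛ0.le hJpos.le),
        ← ENNReal.ofReal_mul (mul_nonneg (div_nonneg hΛ0.le hJpos.le) (by norm_num))]
      congr 1
      have hJne : JL ≠ 0 := hJpos.ne'
      field_simp
      ring
    calc ENNReal.ofReal (Λ / JL) * 2 *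
        (ENNReal.ofReal JL * (ENNReal.ofReal ((4 * Λ) ^ d * ((1 + κ) * JL) ^ 2) * Ssum)
          + ENNReal.ofReal JL * (ENNReal.ofReal ((4 * Λ) ^ d * ((1 + κ) * JL) ^ 2) * Ssum))
        = ENNReal.ofReal (Λ / JL) * (2 * 2) *
            (ENNReal.ofReal JL * ENNReal.ofReal ((4 * Λ) ^ d * ((1 + κ) * JL) ^ 2)) * Ssum := by
          ring
      _ = ENNReal.ofReal ((4 * Λ) ^ (d + 1) * ((1 + κ) * JL) ^ 2) * Ssum := by rw [hco]
  -- the chain estimate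
  have hchain : ∀ d p t, r + 1 ≤ p → p ≤ s → r + 1 ≤ t → t ≤ s → t ≤ p + d → p ≤ t + d →
      LocAux.dSq u' (Icc (z (p - 1)) (z p)) (Icc (z (t - 1)) (z t))
        ≤ ENNReal.ofReal ((4 * Λ) ^ d * ((1 + κ) * JL) ^ 2) * Ssum := by
    intro d
    induction d with
    | zero =>
      intro p t hp1 hp2 ht1 ht2 htp hpt
      rw [pow_zero, one_mul]
      exact hbase p t hp1 hp2 ht1 ht2 (by omega) (by omega)
    | succ d ih =>
      intro p t hp1 hp2 ht1 ht2 htp hpt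
      by_cases hadj : t ≤ p + 1 ∧ p ≤ t + 1
      · refine (hbase p t hp1 hp2 ht1 ht2 hadj.1 hadj.2).trans ?_
        refine mul_le_mul_left (ENNReal.ofReal_le_ofReal ?_) _
        have h4 : (1:ℝ) ≤ (4 * Λ) ^ (d + 1) := LocAux.one_le_pow_real (by linarith) _
        nlinarith [sq_nonneg ((1 + κ) * JL)]
      · rcases (show p + 2 ≤ t ∨ t + 2 ≤ p by omega) with hfar | hfar
        · have havg := LocAux.dSq_avg u' hum (Icc (z (p - 1)) (z p)) (Icc (z (t - 1)) (z t))
            (Icc (z (t - 1 - 1)) (z (t - 1)))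
            (hvol0 (t - 1) (by omega) (by omega)) (hvolTop (t - 1)) (hvolTop t)
          have ih1 := ih p (t - 1) hp1 hp2 (by omega) (by omega) (by omega) (by omega)
          have ih2 := ih (t - 1) t (by omega) (by omega) ht1 ht2 (by omega) (by omega)
          refine havg.trans ?_
          have hstep : (volume (Icc (z (t - 1 - 1)) (z (t - 1))))⁻¹ * 2 *
              (volume (Icc (z (t - 1)) (z t)) *
                  LocAux.dSq u' (Icc (z (p - 1)) (z p)) (Icc (z (t - 1 - 1)) (z (t - 1)))
                + volume (Icc (z (p - 1)) (z p)) *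
                  LocAux.dSq u' (Icc (z (t - 1 - 1)) (z (t - 1))) (Icc (z (t - 1)) (z t)))
              ≤ ENNReal.ofReal (Λ / JL) * 2 *
              (ENNReal.ofReal JL * (ENNReal.ofReal ((4 * Λ) ^ d * ((1 + κ) * JL) ^ 2) * Ssum)
                + ENNReal.ofReal JL *
                    (ENNReal.ofReal ((4 * Λ) ^ d * ((1 + κ) * JL) ^ 2) * Ssum)) := by
            gcongr <;> first
              | exact hvolinv (t - 1) (by omega) (by omega)
              | exact hvolle t ht1 ht2
              | exact hvolle p hp1 hp2
              | exact ih1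
              | exact ih2
          exact hstep.trans (le_of_eq (hcollect d))
        · have havg := LocAux.dSq_avg u' hum (Icc (z (p - 1)) (z p)) (Icc (z (t - 1)) (z t))
            (Icc (z (p - 1 - 1)) (z (p - 1)))
            (hvol0 (p - 1) (by omega) (by omega)) (hvolTop (p - 1)) (hvolTop t)
          have ih1 := ih p (p - 1) hp1 hp2 (by omega) (by omega) (by omega) (by omega)
          have ih2 := ih (p - 1) t (by omega) (by omega) ht1 ht2 (by omega) (by omega)
          refine havg.trans ?_
          have hstep : (volume (Icc (z (p - 1 - 1)) (z (p - 1))))⁻¹ * 2 *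
              (volume (Icc (z (t - 1)) (z t)) *
                  LocAux.dSq u' (Icc (z (p - 1)) (z p)) (Icc (z (p - 1 - 1)) (z (p - 1)))
                + volume (Icc (z (p - 1)) (z p)) *
                  LocAux.dSq u' (Icc (z (p - 1 - 1)) (z (p - 1))) (Icc (z (t - 1)) (z t)))
              ≤ ENNReal.ofReal (Λ / JL) * 2 *
              (ENNReal.ofReal JL * (ENNReal.ofReal ((4 * Λ) ^ d * ((1 + κ) * JL) ^ 2) * Ssum)
                + ENNReal.ofReal JL *
                    (ENNReal.ofReal ((4 * Λ) ^ d * ((1 + κ) * JL) ^ 2) * Ssum)) := by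
            gcongr <;> first
              | exact hvolinv (p - 1) (by omega) (by omega)
              | exact hvolle t ht1 ht2
              | exact hvolle p hp1 hp2
              | exact ih1
              | exact ih2
          exact hstep.trans (le_of_eq (hcollect d))
  -- gap bound for far elements
  have hgapb : ∀ p t, r + 1 ≤ p → p ≤ s → r + 1 ≤ t → t ≤ s → (p + 2 ≤ t ∨ t + 2 ≤ p) →
      ∀ x ∈ Icc (z (p - 1)) (z p), ∀ y ∈ Icc (z (t - 1)) (z t),
        (JL / Λ) ^ 2 ≤ (x - y) ^ 2 := by
    intro p t hp1 hp2 ht1 ht2 hfar x hx y hy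
    have hJΛ : 0 < JL / Λ := div_pos hJpos hΛ0
    rcases hfar with h | h
    · have hmid := hJle (p + 1) (by omega) (by omega)
      have he : p + 1 - 1 = p := by omega
      rw [he] at hmid
      have hz1 : z (p + 1) ≤ z (t - 1) := hmono (p + 1) (t - 1) (by omega) (by omega)
      have hdiv : JL / Λ ≤ z (p + 1) - z p := by
        rw [div_le_iff₀ hΛ0]; linarith
      have h1 : JL / Λ ≤ y - x := by
        have := hx.2; have := hy.1; linarith
      nlinarith [sq_nonneg (y - x - JL / Λ)]
    · have hmid := hJle (t + 1) (by omega) (by omega)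
      have he : t + 1 - 1 = t := by omega
      rw [he] at hmid
      have hz1 : z (t + 1) ≤ z (p - 1) := hmono (t + 1) (p - 1) (by omega) (by omega)
      have hdiv : JL / Λ ≤ z (t + 1) - z t := by
        rw [div_le_iff₀ hΛ0]; linarith
      have h1 : JL / Λ ≤ x - y := by
        have := hx.1; have := hy.2; linarith
      nlinarith [sq_nonneg (x - y - JL / Λ)]
  -- estimate for an arbitrary pair of elements
  have hpair : ∀ p t, r + 1 ≤ p → p ≤ s → r + 1 ≤ t → t ≤ s →
      (∫⁻ x in Icc (z (p - 1)) (z p), ∫⁻ y in Icc (z (t - 1)) (z t),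
        ENNReal.ofReal ((u' x - u' y) ^ 2 / (x - y) ^ 2))
      ≤ ENNReal.ofReal c0 * Ssum := by
    intro p t hp1 hp2 ht1 ht2
    by_cases hadj : t ≤ p + 1 ∧ p ≤ t + 1
    · obtain ⟨k, hkmem, hk1, hk2, hsub1, hsub2⟩ := hpatch p t hp1 hp2 ht1 ht2 hadj.1 hadj.2
      have h1 : (∫⁻ x in Icc (z (p - 1)) (z p), ∫⁻ y in Icc (z (t - 1)) (z t),
          ENNReal.ofReal ((u' x - u' y) ^ 2 / (x - y) ^ 2))
          ≤ sobSemiSq u' (Icc (z (k - 1)) (z (min (k + 1) n))) :=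
        LocAux.sob_pair_le u' hsub1 hsub2
      have h2 : sobSemiSq u' (Icc (z (k - 1)) (z (min (k + 1) n))) ≤ Ssum := by
        rw [hSdef]
        exact Finset.single_le_sum
          (f := fun i => sobSemiSq u' (Icc (z (i - 1)) (z (min (i + 1) n))))
          (fun i _ => zero_le) hkmem
      calc _ ≤ Ssum := h1.trans h2
        _ = 1 * Ssum := (one_mul _).symm
        _ ≤ ENNReal.ofReal c0 * Ssum :=
            mul_le_mul_left (ENNReal.one_le_ofReal.mpr hc0_1) _
    · have hfar : p + 2 ≤ t ∨ t + 2 ≤ p := by omega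
      have hJΛ : 0 < JL / Λ := div_pos hJpos hΛ0
      have hd := hchain (2 * m) p t hp1 hp2 ht1 ht2 (by omega) (by omega)
      refine (LocAux.ratio_le_dSq u' measurableSet_Icc measurableSet_Icc hJΛ
        (hgapb p t hp1 hp2 ht1 ht2 hfar)).trans ?_
      refine (mul_le_mul_right hd _).trans ?_
      rw [← mul_assoc, ← ENNReal.ofReal_mul (by positivity)]
      refine mul_le_mul_left (ENNReal.ofReal_le_ofReal ?_) _
      have hJne : JL ≠ 0 := hJpos.ne'
      have hΛne : Λ ≠ 0 := hΛ0.ne'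
      have hre : 1 / (JL / Λ) ^ 2 * ((4 * Λ) ^ (2 * m) * ((1 + κ) * JL) ^ 2)
          = Λ ^ 2 * (4 * Λ) ^ (2 * m) * (1 + κ) ^ 2 := by
        field_simp
      rw [hre, hc0def]
      linarith
  -- seminorm over J bounded by patch seminorms
  have hsobJ : sobSemiSq u' J ≤ ENNReal.ofReal c1 * Ssum := by
    have hsplit : sobSemiSq u' J ≤
        ∑ p ∈ Finset.Icc (r + 1) s, ∑ t ∈ Finset.Icc (r + 1) s,
          (∫⁻ x in Icc (z (p - 1)) (z p), ∫⁻ y in Icc (z (t - 1)) (z t),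
            ENNReal.ofReal ((u' x - u' y) ^ 2 / (x - y) ^ 2)) := by
      calc sobSemiSq u' J
          ≤ ∑ p ∈ Finset.Icc (r + 1) s, ∫⁻ x in Icc (z (p - 1)) (z p),
              ∫⁻ y in Icc (z r) (z s),
                ENNReal.ofReal ((u' x - u' y) ^ 2 / (x - y) ^ 2) :=
            LocAux.lintegral_Icc_le_sum z _ r s hrs.le
        _ ≤ ∑ p ∈ Finset.Icc (r + 1) s, ∫⁻ x in Icc (z (p - 1)) (z p),
              ∑ t ∈ Finset.Icc (r + 1) s, ∫⁻ y in Icc (z (t - 1)) (z t),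
                ENNReal.ofReal ((u' x - u' y) ^ 2 / (x - y) ^ 2) :=
            Finset.sum_le_sum fun p _ => lintegral_mono fun x =>
              LocAux.lintegral_Icc_le_sum z _ r s hrs.le
        _ = ∑ p ∈ Finset.Icc (r + 1) s, ∑ t ∈ Finset.Icc (r + 1) s,
              ∫⁻ x in Icc (z (p - 1)) (z p), ∫⁻ y in Icc (z (t - 1)) (z t),
                ENNReal.ofReal ((u' x - u' y) ^ 2 / (x - y) ^ 2) :=
            Finset.sum_congr rfl fun p _ =>
              lintegral_finset_sum _ fun t _ => hratm _
    refine hsplit.trans ?_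
    have hcard : ((Finset.Icc (r + 1) s).card : ℝ≥0∞) ≤ ENNReal.ofReal (2 * (m:ℝ) + 1) := by
      rw [Nat.card_Icc]
      have he : s + 1 - (r + 1) = s - r := by omega
      rw [he, ← ENNReal.ofReal_natCast]
      refine ENNReal.ofReal_le_ofReal ?_
      have hc := (Nat.cast_le (α := ℝ)).mpr hsr
      push_cast at hc
      linarith
    calc (∑ p ∈ Finset.Icc (r + 1) s, ∑ t ∈ Finset.Icc (r + 1) s,
          ∫⁻ x in Icc (z (p - 1)) (z p), ∫⁻ y in Icc (z (t - 1)) (z t),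
            ENNReal.ofReal ((u' x - u' y) ^ 2 / (x - y) ^ 2))
        ≤ ∑ p ∈ Finset.Icc (r + 1) s,
            (Finset.Icc (r + 1) s).card • (ENNReal.ofReal c0 * Ssum) := by
          refine Finset.sum_le_sum fun p hp => ?_
          refine Finset.sum_le_card_nsmul _ _ _ fun t ht => ?_
          have hp' := Finset.mem_Icc.mp hp
          have ht' := Finset.mem_Icc.mp ht
          exact hpair p t hp'.1 hp'.2 ht'.1 ht'.2
      _ = ((Finset.Icc (r + 1) s).card : ℝ≥0∞) *
            (((Finset.Icc (r + 1) s).card : ℝ≥0∞) * (ENNReal.ofReal c0 * Ssum)) := by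
          rw [Finset.sum_const, nsmul_eq_mul, nsmul_eq_mul]
      _ ≤ ENNReal.ofReal (2 * (m:ℝ) + 1) *
            (ENNReal.ofReal (2 * (m:ℝ) + 1) * (ENNReal.ofReal c0 * Ssum)) := by
          gcongr
      _ = ENNReal.ofReal c1 * Ssum := by
          have hco : ENNReal.ofReal (2 * (m:ℝ) + 1) * ENNReal.ofReal (2 * (m:ℝ) + 1) *
              ENNReal.ofReal c0 = ENNReal.ofReal c1 := by
            rw [← ENNReal.ofReal_mul (by positivity), ← ENNReal.ofReal_mul (by positivity)]
            congr 1
            rw [hc1def]; ring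
          calc ENNReal.ofReal (2 * (m:ℝ) + 1) *
              (ENNReal.ofReal (2 * (m:ℝ) + 1) * (ENNReal.ofReal c0 * Ssum))
              = ENNReal.ofReal (2 * (m:ℝ) + 1) * ENNReal.ofReal (2 * (m:ℝ) + 1) *
                  ENNReal.ofReal c0 * Ssum := by ring
            _ = ENNReal.ofReal c1 * Ssum := by rw [hco]
  -- the L² Poincaré-type step
  haveI hfinJ : IsFiniteMeasure (volume.restrict J) := by
    rw [hJdef]; infer_instance
  have huJ : MemLp u' 2 (volume.restrict J) :=
    MemLp.mono_measure (Measure.restrict_mono hJab le_rfl) hu2'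
  have hInt_u : Integrable u' (volume.restrict J) := huJ.integrable one_le_two
  have hInt_u2 : Integrable (fun x => u' x ^ 2) (volume.restrict J) := huJ.integrable_sq
  have hψ2 : MemLp (fun t => (1:ℝ) - ψ t) 2 (volume.restrict J) := by
    exact (memLp_const 1).sub hψ
  have hInt_psi2 : Integrable (fun x => (1 - ψ x) ^ 2) (volume.restrict J) := by
    exact hψ2.integrable_sq
  have hInt_upsi : Integrable (fun x => u' x * ψ x) (volume.restrict J) :=
    LocAux.integrable_mul huJ hψ
  have hInt_u1psi : Integrable (fun x => u' x * (1 - ψ x)) (volume.restrict J) := by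
    exact LocAux.integrable_mul huJ hψ2
  set Areal : ℝ := ∫ x in J, u' x ^ 2 with hArealdef
  set Breal : ℝ := ∫ x in J, u' x with hBrealdef
  have hA0 : 0 ≤ Areal := by
    rw [hArealdef]; exact integral_nonneg fun x => sq_nonneg _
  have hCre : ENNReal.ofReal (∫ x in J, (1 - ψ x) ^ 2) = l2Sq (fun t => 1 - ψ t) J :=
    ofReal_integral_eq_lintegral_ofReal hInt_psi2
      (Filter.Eventually.of_forall fun x => sq_nonneg _)
  have hCb : (∫ x in J, (1 - ψ x) ^ 2) ≤ (1 - q) * JL := by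
    have h2 := hψq
    rw [← hCre] at h2
    exact (ENNReal.ofReal_le_ofReal_iff (by nlinarith)).mp h2
  have hBeq : Breal = ∫ x in J, u' x * (1 - ψ x) := by
    rw [hBrealdef]
    calc (∫ x in J, u' x)
        = ∫ x in J, (u' x * ψ x + u' x * (1 - ψ x)) :=
          integral_congr_ae (Filter.Eventually.of_forall fun x => by ring)
      _ = (∫ x in J, u' x * ψ x) + ∫ x in J, u' x * (1 - ψ x) :=
          integral_add hInt_upsi hInt_u1psi
      _ = ∫ x in J, u' x * (1 - ψ x) := by rw [horth', zero_add]
  have hCS := LocAux.cauchy_schwarz huJ hψ2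
  rw [← hArealdef] at hCS
  have hB2 : Breal ^ 2 ≤ (1 - q) * JL * Areal := by
    rw [hBeq]
    calc (∫ x in J, u' x * (1 - ψ x)) ^ 2
        ≤ Areal * (∫ x in J, (1 - ψ x) ^ 2) := hCS
      _ ≤ Areal * ((1 - q) * JL) := mul_le_mul_of_nonneg_left hCb hA0
      _ = (1 - q) * JL * Areal := by ring
  have hwiy : ∀ x : ℝ, Integrable (fun y => (u' x - u' y) ^ 2) (volume.restrict J) := by
    intro x
    have hfun : (fun y => (u' x - u' y) ^ 2)
        = fun y => (u' x ^ 2 - 2 * u' x * u' y) + u' y ^ 2 := funext fun y => by ring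
    rw [hfun]
    have i5 : Integrable (fun y => u' x ^ 2 - 2 * u' x * u' y) (volume.restrict J) := by
      exact (integrable_const _).sub (hInt_u.const_mul _)
    exact i5.add hInt_u2
  have hμJ : ((volume.restrict J) univ).toReal = JL := by
    rw [Measure.restrict_apply_univ, hJdef, Real.volume_Icc, ← hJLdef,
      ENNReal.toReal_ofReal hJpos.le]
  have hw : ∀ x : ℝ, (∫ y in J, (u' x - u' y) ^ 2)
      = JL * u' x ^ 2 - 2 * Breal * u' x + Areal := by
    intro x
    have hfun : (fun y => (u' x - u' y) ^ 2)
        = fun y => (u' x ^ 2 - 2 * u' x * u' y) + u' y ^ 2 := funext fun y => by ring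
    have i5 : Integrable (fun y => u' x ^ 2 - 2 * u' x * u' y) (volume.restrict J) := by
      exact (integrable_const _).sub (hInt_u.const_mul _)
    have i6 : Integrable (fun y => 2 * u' x * u' y) (volume.restrict J) := by
      exact hInt_u.const_mul _
    rw [hfun, integral_add i5 hInt_u2, integral_sub (integrable_const _) i6,
      integral_const, integral_const_mul, smul_eq_mul, measureReal_def, hμJ, ← hArealdef, ← hBrealdef]
    ring
  have hwnn : ∀ x : ℝ, 0 ≤ JL * u' x ^ 2 - 2 * Breal * u' x + Areal := by
    intro x
    rw [← hw x]
    exact integral_nonneg fun y => sq_nonneg _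
  have hWint : Integrable (fun x => JL * u' x ^ 2 - 2 * Breal * u' x + Areal)
      (volume.restrict J) := by
    have i1 : Integrable (fun x => JL * u' x ^ 2 - 2 * Breal * u' x) (volume.restrict J) := by
      exact (hInt_u2.const_mul _).sub (hInt_u.const_mul _)
    exact i1.add (integrable_const _)
  have hWval : (∫ x in J, (JL * u' x ^ 2 - 2 * Breal * u' x + Areal))
      = 2 * JL * Areal - 2 * Breal ^ 2 := by
    have i1 : Integrable (fun x => JL * u' x ^ 2 - 2 * Breal * u' x) (volume.restrict J) := by
      exact (hInt_u2.const_mul _).sub (hInt_u.const_mul _)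
    have i3 : Integrable (fun x => JL * u' x ^ 2) (volume.restrict J) := by
      exact hInt_u2.const_mul _
    have i4 : Integrable (fun x => 2 * Breal * u' x) (volume.restrict J) := by
      exact hInt_u.const_mul _
    rw [integral_add i1 (integrable_const _), integral_sub i3 i4, integral_const_mul,
      integral_const_mul, integral_const, smul_eq_mul, measureReal_def, hμJ, ← hArealdef, ← hBrealdef]
    ring
  have hWlow : 2 * q * JL * Areal ≤ ∫ x in J, (JL * u' x ^ 2 - 2 * Breal * u' x + Areal) := by
    rw [hWval]
    nlinarith [hB2, hA0, hJpos]
  have hofW : ENNReal.ofReal (∫ x in J, (JL * u' x ^ 2 - 2 * Breal * u' x + Areal))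
      = LocAux.dSq u' J J := by
    rw [ofReal_integral_eq_lintegral_ofReal hWint (Filter.Eventually.of_forall hwnn)]
    unfold LocAux.dSq
    refine lintegral_congr fun x => ?_
    rw [← hw x, ofReal_integral_eq_lintegral_ofReal (hwiy x)
      (Filter.Eventually.of_forall fun y => sq_nonneg _)]
  have hJmeas : MeasurableSet J := by rw [hJdef]; exact measurableSet_Icc
  have hJL2 : ∀ x ∈ J, ∀ y ∈ J, (x - y) ^ 2 ≤ JL ^ 2 := by
    intro x hx y hy
    rw [hJdef] at hx hy
    have hJL' : JL = z s - z r := hJLdef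
    have h1 := hx.1; have h2 := hx.2; have h3 := hy.1; have h4 := hy.2
    exact sq_le_sq' (by linarith) (by linarith)
  have hdsq : LocAux.dSq u' J J ≤ ENNReal.ofReal (JL ^ 2) * sobSemiSq u' J :=
    LocAux.dSq_le_sob u' hJmeas hJmeas (subset_refl _) (subset_refl _) hJL2
  have hl2A : ENNReal.ofReal Areal = l2Sq u' J := by
    rw [hArealdef]
    exact ofReal_integral_eq_lintegral_ofReal hInt_u2
      (Filter.Eventually.of_forall fun x => sq_nonneg _)
  have hkey : ENNReal.ofReal (2 * q * JL) * ENNReal.ofReal Areal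
      ≤ ENNReal.ofReal (JL ^ 2 * c1) * Ssum := by
    calc ENNReal.ofReal (2 * q * JL) * ENNReal.ofReal Areal
        = ENNReal.ofReal (2 * q * JL * Areal) := by
          rw [← ENNReal.ofReal_mul (by nlinarith : (0:ℝ) ≤ 2 * q * JL)]
      _ ≤ ENNReal.ofReal (∫ x in J, (JL * u' x ^ 2 - 2 * Breal * u' x + Areal)) :=
          ENNReal.ofReal_le_ofReal hWlow
      _ = LocAux.dSq u' J J := hofW
      _ ≤ ENNReal.ofReal (JL ^ 2) * sobSemiSq u' J := hdsq
      _ ≤ ENNReal.ofReal (JL ^ 2) * (ENNReal.ofReal c1 * Ssum) := mul_le_mul_right hsobJ _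
      _ = ENNReal.ofReal (JL ^ 2 * c1) * Ssum := by
          rw [ENNReal.ofReal_mul (p := JL ^ 2) (by positivity), mul_assoc]
  have h2q0 : ENNReal.ofReal (2 * q * JL) ≠ 0 := by
    refine (ENNReal.ofReal_pos.mpr ?_).ne'
    nlinarith
  calc l2Sq u' J = ENNReal.ofReal Areal := hl2A.symm
    _ = (ENNReal.ofReal (2 * q * JL))⁻¹ *
          (ENNReal.ofReal (2 * q * JL) * ENNReal.ofReal Areal) := by
        rw [← mul_assoc, ENNReal.inv_mul_cancel h2q0 ENNReal.ofReal_ne_top, one_mul]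
    _ ≤ (ENNReal.ofReal (2 * q * JL))⁻¹ * (ENNReal.ofReal (JL ^ 2 * c1) * Ssum) :=
        mul_le_mul_right hkey _
    _ = ((ENNReal.ofReal (2 * q * JL))⁻¹ * ENNReal.ofReal (JL ^ 2 * c1)) * Ssum :=
        (mul_assoc _ _ _).symm
    _ = ENNReal.ofReal (c1 / (2 * q) * JL) * Ssum := by
        rw [← ENNReal.ofReal_inv_of_pos (by nlinarith : (0:ℝ) < 2 * q * JL),
          ← ENNReal.ofReal_mul (inv_nonneg.mpr (by nlinarith : (0:ℝ) ≤ 2 * q * JL))]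
        congr 1
        have hJne : JL ≠ 0 := hJpos.ne'
        have hqne : q ≠ 0 := hq0.ne'
        field_simp
end

section
/- Let 𝒦 = (t_i)_{i∈ℤ} be a bi-infinite nondecreasing real knot sequence with t_i → ±∞ as i → ±∞, and let 𝒲 = (w_i)_{i∈ℤ} be positive weights. For each ℓ ∈ ℕ let 𝒦_ℓ = (t_{i,ℓ})_{i∈ℤ} be a bi-infinite nondecreasing knot sequence with t_{i,ℓ} → ±∞ as i → ±∞ such that the multiplicity pattern is preserved (for all i, j ∈ ℤ: t_{i,ℓ} = t_{j,ℓ} if and only if t_i = t_j), and let 𝒲_ℓ = (w_{i,ℓ})_{i∈ℤ} be positive weights. If t_{i,ℓ} → t_i and w_{i,ℓ} → w_i as ℓ → ∞ for every i ∈ ℤ, then for every p ∈ ℕ₀ and every i ∈ ℤ, the NURBS R_{i,p}^{𝒦_ℓ, 𝒲_ℓ} converge to R_{i,p}^{𝒦, 𝒲} Lebesgue-almost everywhere on ℝ. -/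
open Set Filter

/-- The coefficient functions of the Cox–de Boor recursion. -/
noncomputable def bsBeta (t : ℤ → ℝ) (i : ℤ) (p : ℕ) (x : ℝ) : ℝ :=
  if t i = t (i + p) then 0 else (x - t i) / (t (i + p) - t i)

/-- B-splines via the Cox–de Boor recursion. -/
noncomputable def Bspline (t : ℤ → ℝ) : ℕ → ℤ → ℝ → ℝ
  | 0, i, x => if x ∈ Set.Ico (t (i - 1)) (t i) then 1 else 0
  | p + 1, i, x => bsBeta t (i - 1) (p + 1) x * Bspline t p i x
      + (1 - bsBeta t i (p + 1) x) * Bspline t p (i + 1) x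

/-- Non-uniform rational B-splines (NURBS). -/
noncomputable def nurbs (t : ℤ → ℝ) (w : ℤ → ℝ) (p : ℕ) (i : ℤ) (x : ℝ) : ℝ :=
  w i * Bspline t p i x / ∑ᶠ ℓ : ℤ, w ℓ * Bspline t p ℓ x

lemma Bspline_support {t : ℤ → ℝ} (hmono : Monotone t) (p : ℕ) (i : ℤ) (x : ℝ)
    (h : Bspline t p i x ≠ 0) : t (i - 1) ≤ x ∧ x < t (i + p) := by
  induction p generalizing i with
  | zero =>
    simp only [Bspline] at h
    split_ifs at h with hx
    · simpa using hx
    · simp at h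
  | succ p ih =>
    simp only [Bspline] at h
    have hor : Bspline t p i x ≠ 0 ∨ Bspline t p (i + 1) x ≠ 0 := by
      by_contra hc
      push_neg at hc
      simp [hc.1, hc.2] at h
    rcases hor with h1 | h1
    · obtain ⟨h2, h3⟩ := ih i h1
      exact ⟨h2, h3.trans_le (hmono (by push_cast; omega))⟩
    · obtain ⟨h2, h3⟩ := ih (i + 1) h1
      constructor
      · exact (hmono (by omega)).trans h2
      · exact h3.trans_le (hmono (by push_cast; omega))

lemma Bspline_nonneg {t : ℤ → ℝ} (hmono : Monotone t) (p : ℕ) (i : ℤ) (x : ℝ) :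
    0 ≤ Bspline t p i x := by
  induction p generalizing i with
  | zero =>
    simp only [Bspline]
    split_ifs <;> norm_num
  | succ p ih =>
    simp only [Bspline]
    have term1 : 0 ≤ bsBeta t (i - 1) (p + 1) x * Bspline t p i x := by
      rcases eq_or_ne (Bspline t p i x) 0 with h | h
      · simp [h]
      · obtain ⟨h2, h3⟩ := Bspline_support hmono p i x h
        have hle : t (i - 1) ≤ t (i - 1 + (p + 1 : ℕ)) := hmono (by push_cast; omega)
        unfold bsBeta
        split_ifs with he
        · simp
        · have hlt : t (i - 1) < t (i - 1 + (p + 1 : ℕ)) := lt_of_le_of_ne hle he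
          have : x < t (i - 1 + (p + 1 : ℕ)) := by
            refine h3.trans_le (hmono ?_); push_cast; omega
          exact mul_nonneg (div_nonneg (by linarith) (by linarith)) (ih i)
    have term2 : 0 ≤ (1 - bsBeta t i (p + 1) x) * Bspline t p (i + 1) x := by
      rcases eq_or_ne (Bspline t p (i + 1) x) 0 with h | h
      · simp [h]
      · obtain ⟨h2, h3⟩ := Bspline_support hmono p (i + 1) x h
        have h2' : t i ≤ x := by simpa using h2
        have h3' : x < t (i + (p + 1 : ℕ)) := by
          refine h3.trans_le (hmono ?_); push_cast; omega
        unfold bsBeta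
        split_ifs with he
        · simpa using mul_nonneg zero_le_one (ih (i + 1))
        · have hlt : t i < t (i + (p + 1 : ℕ)) :=
            lt_of_le_of_ne (hmono (by push_cast; omega)) he
          have : 0 ≤ 1 - (x - t i) / (t (i + (p + 1 : ℕ)) - t i) := by
            rw [sub_nonneg, div_le_one (by linarith)]
            linarith
          exact mul_nonneg this (ih (i + 1))
    positivity

lemma sum_B0 {t : ℤ → ℝ} (hmono : Monotone t) (a b : ℤ) (hab : a ≤ b) (x : ℝ) :
    ∑ ℓ ∈ Finset.Icc a b, Bspline t 0 ℓ x =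
      if x ∈ Set.Ico (t (a - 1)) (t b) then 1 else 0 := by
  refine Int.le_induction (motive := fun b _ => ∑ ℓ ∈ Finset.Icc a b, Bspline t 0 ℓ x =
      if x ∈ Set.Ico (t (a - 1)) (t b) then 1 else 0) ?_ ?_ b hab
  · show ∑ ℓ ∈ Finset.Icc a a, Bspline t 0 ℓ x = _
    rw [Finset.Icc_self, Finset.sum_singleton]; rfl
  · intro b hb ih
    rw [show Finset.Icc a (b + 1) = insert (b + 1) (Finset.Icc a b) by
          ext y; simp only [Finset.mem_Icc, Finset.mem_insert]; omega,
        Finset.sum_insert (by simp), ih]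
    simp only [Bspline, add_sub_cancel_right]
    have h1 : t (a - 1) ≤ t b := hmono (by omega)
    have h2 : t b ≤ t (b + 1) := hmono (by omega)
    by_cases hx1 : t (a - 1) ≤ x <;> by_cases hx2 : x < t b <;>
      by_cases hx3 : x < t (b + 1) <;> by_cases hx4 : t b ≤ x <;>
      simp_all [Set.mem_Ico] <;> linarith

lemma Bspline_partition {t : ℤ → ℝ} (hmono : Monotone t) (p : ℕ) (a b : ℤ) (x : ℝ)
    (ha : t (a + p) < x) (hb : x < t b) :
    ∑ ℓ ∈ Finset.Icc a b, Bspline t p ℓ x = 1 := by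
  induction p generalizing a with
  | zero =>
    have ha' : t a < x := by simpa using ha
    have hab : a ≤ b := by
      by_contra hc
      exact absurd ((hmono (by omega : b ≤ a)).trans_lt (ha'.trans hb)) (lt_irrefl _)
    rw [sum_B0 hmono a b hab]
    have : t (a - 1) ≤ x := (hmono (by omega : a - 1 ≤ a)).trans ha'.le
    simp [Set.mem_Ico, this, hb]
  | succ p ih =>
    have ha' : t (a + p) < x := lt_of_le_of_lt (hmono (by push_cast; omega)) ha
    have hBa : Bspline t p a x = 0 := by
      by_contra hc
      exact absurd ((Bspline_support hmono p a x hc).2.trans ha') (lt_irrefl _)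
    have hBb : Bspline t p (b + 1) x = 0 := by
      by_contra hc
      have := (Bspline_support hmono p (b + 1) x hc).1
      simp only [add_sub_cancel_right] at this
      linarith
    simp only [Bspline]
    rw [Finset.sum_add_distrib]
    have hre : ∑ ℓ ∈ Finset.Icc a b, (1 - bsBeta t ℓ (p + 1) x) * Bspline t p (ℓ + 1) x
        = ∑ ℓ ∈ Finset.Icc (a + 1) (b + 1),
            (1 - bsBeta t (ℓ - 1) (p + 1) x) * Bspline t p ℓ x := by
      rw [← Finset.map_add_right_Icc a b 1, Finset.sum_map]
      simp
    rw [hre]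
    have e1 : ∑ ℓ ∈ Finset.Icc (a + 1) (b + 1),
          (1 - bsBeta t (ℓ - 1) (p + 1) x) * Bspline t p ℓ x
        = ∑ ℓ ∈ Finset.Icc a b, (1 - bsBeta t (ℓ - 1) (p + 1) x) * Bspline t p ℓ x := by
      have hs1 : Finset.Icc (a + 1) (b + 1) ⊆ Finset.Icc a (b + 1) :=
        Finset.Icc_subset_Icc (by omega) le_rfl
      have hs2 : Finset.Icc a b ⊆ Finset.Icc a (b + 1) :=
        Finset.Icc_subset_Icc le_rfl (by omega)
      rw [Finset.sum_subset hs1 ?h1, ← Finset.sum_subset hs2 ?h2]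
      case h1 =>
        intro y hy hny
        have : y = a := by
          simp only [Finset.mem_Icc] at hy hny; omega
        rw [this, hBa, mul_zero]
      case h2 =>
        intro y hy hny
        have : y = b + 1 := by
          simp only [Finset.mem_Icc] at hy hny; omega
        rw [this, hBb, mul_zero]
    rw [e1, ← Finset.sum_add_distrib]
    have : ∀ ℓ, bsBeta t (ℓ - 1) (p + 1) x * Bspline t p ℓ x
        + (1 - bsBeta t (ℓ - 1) (p + 1) x) * Bspline t p ℓ x = Bspline t p ℓ x := by
      intro ℓ; ring
    rw [Finset.sum_congr rfl fun ℓ _ => this ℓ]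
    exact ih a ha'

lemma bsBeta_tendsto {t : ℤ → ℝ} {tseq : ℕ → ℤ → ℝ}
    (hmult : ∀ n i j, tseq n i = tseq n j ↔ t i = t j)
    (htconv : ∀ i, Tendsto (fun n => tseq n i) atTop (nhds (t i)))
    (x : ℝ) (i : ℤ) (p : ℕ) :
    Tendsto (fun n => bsBeta (tseq n) i p x) atTop (nhds (bsBeta t i p x)) := by
  by_cases he : t i = t (i + p)
  · have h0 : (fun n => bsBeta (tseq n) i p x) = fun _ => (0 : ℝ) :=
      funext fun n => by simp [bsBeta, (hmult n i (i + p)).2 he]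
    have h1 : bsBeta t i p x = 0 := by simp [bsBeta, he]
    rw [h0, h1]
    exact tendsto_const_nhds
  · have h0 : (fun n => bsBeta (tseq n) i p x)
        = fun n => (x - tseq n i) / (tseq n (i + p) - tseq n i) := by
      funext n
      have hne : ¬ tseq n i = tseq n (i + p) := fun h => he ((hmult n i (i + p)).1 h)
      simp [bsBeta, hne]
    have h1 : bsBeta t i p x = (x - t i) / (t (i + p) - t i) := by simp [bsBeta, he]
    rw [h0, h1]
    exact Tendsto.div (tendsto_const_nhds.sub (htconv i))
      ((htconv (i + p)).sub (htconv i)) (sub_ne_zero.2 (Ne.symm he))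

lemma Bspline_tendsto {t : ℤ → ℝ} {tseq : ℕ → ℤ → ℝ}
    (hmult : ∀ n i j, tseq n i = tseq n j ↔ t i = t j)
    (htconv : ∀ i, Tendsto (fun n => tseq n i) atTop (nhds (t i)))
    (x : ℝ) (hx : ∀ j, t j ≠ x) (p : ℕ) (i : ℤ) :
    Tendsto (fun n => Bspline (tseq n) p i x) atTop (nhds (Bspline t p i x)) := by
  induction p generalizing i with
  | zero =>
    have hle : ∀ j, ∀ᶠ n in atTop, (tseq n j ≤ x ↔ t j ≤ x) := by
      intro j
      rcases lt_or_gt_of_ne (hx j) with h | h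
      · filter_upwards [(htconv j).eventually (eventually_lt_nhds h)] with n hn
        simp [hn.le, h.le]
      · filter_upwards [(htconv j).eventually (eventually_gt_nhds h)] with n hn
        simp [not_le.2 hn, not_le.2 h]
    have hlt : ∀ j, ∀ᶠ n in atTop, (x < tseq n j ↔ x < t j) := by
      intro j
      rcases lt_or_gt_of_ne (hx j) with h | h
      · filter_upwards [(htconv j).eventually (eventually_lt_nhds h)] with n hn
        simp [not_lt.2 hn.le, not_lt.2 h.le]
      · filter_upwards [(htconv j).eventually (eventually_gt_nhds h)] with n hn
        simp [hn, h]
    refine tendsto_const_nhds.congr' ?_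
    filter_upwards [hle (i - 1), hlt i] with n h1 h2
    simp only [Bspline, Set.mem_Ico]
    simp only [h1, h2]
  | succ p ih =>
    simp only [Bspline]
    exact ((bsBeta_tendsto hmult htconv x (i - 1) (p + 1)).mul (ih i)).add
      ((tendsto_const_nhds.sub (bsBeta_tendsto hmult htconv x i (p + 1))).mul (ih (i + 1)))

lemma support_subset_Icc {t : ℤ → ℝ} {w : ℤ → ℝ} (hmono : Monotone t)
    (p : ℕ) (x : ℝ) {a b : ℤ} (ha : t (a + p) < x) (hb : x < t b) :
    (Function.support fun ℓ => w ℓ * Bspline t p ℓ x) ⊆ ↑(Finset.Icc a b) := by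
  intro ℓ hℓ
  have hB : Bspline t p ℓ x ≠ 0 := fun h => hℓ (by simp [Function.mem_support, h])
  obtain ⟨h1, h2⟩ := Bspline_support hmono p ℓ x hB
  simp only [Finset.coe_Icc, Set.mem_Icc]
  constructor
  · by_contra hc
    exact absurd ((hmono (by omega : ℓ + (p : ℤ) ≤ a + (p : ℤ))).trans_lt ha) (not_lt.2 h2.le)
  · by_contra hc
    exact absurd ((hmono (by omega : b ≤ ℓ - 1)).trans h1) (not_le.2 hb)

/-- Lemma 4.2 (ix): if the knots converge pointwise preserving the multiplicity
pattern and the weights converge pointwise, then the NURBS converge almost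
everywhere. -/
theorem nurbs_ae_convergence
    (t : ℤ → ℝ) (hmono : Monotone t)
    (htop : Tendsto t atTop atTop) (hbot : Tendsto t atBot atBot)
    (w : ℤ → ℝ) (hw : ∀ i, 0 < w i)
    (tseq : ℕ → ℤ → ℝ) (hmonoSeq : ∀ ℓ, Monotone (tseq ℓ))
    (htopSeq : ∀ ℓ, Tendsto (tseq ℓ) atTop atTop)
    (hbotSeq : ∀ ℓ, Tendsto (tseq ℓ) atBot atBot)
    (hmult : ∀ ℓ (i j : ℤ), tseq ℓ i = tseq ℓ j ↔ t i = t j)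
    (wseq : ℕ → ℤ → ℝ) (hwSeq : ∀ ℓ i, 0 < wseq ℓ i)
    (htconv : ∀ i, Tendsto (fun ℓ => tseq ℓ i) atTop (nhds (t i)))
    (hwconv : ∀ i, Tendsto (fun ℓ => wseq ℓ i) atTop (nhds (w i)))
    (p : ℕ) (i : ℤ) :
    ∀ᵐ x : ℝ, Tendsto (fun ℓ => nurbs (tseq ℓ) (wseq ℓ) p i x) atTop
      (nhds (nurbs t w p i x)) := by
  have hae : ∀ᵐ x : ℝ, ∀ j, t j ≠ x := by
    rw [MeasureTheory.ae_iff]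
    refine MeasureTheory.measure_mono_null (fun x hx => ?_)
      ((Set.countable_range t).measure_zero _)
    simp only [Set.mem_setOf_eq, not_forall, not_not] at hx
    obtain ⟨j, hj⟩ := hx
    exact ⟨j, hj⟩
  filter_upwards [hae] with x hx
  -- choose a, b
  obtain ⟨a', ha'⟩ := (hbot.eventually (eventually_lt_atBot x)).exists
  obtain ⟨b, hb⟩ := (htop.eventually (eventually_gt_atTop x)).exists
  set a : ℤ := a' - p with ha_def
  have ha : t (a + p) < x := by
    rwa [show a + (p : ℤ) = a' by omega]
  -- numerator convergence
  have hnum : Tendsto (fun n => wseq n i * Bspline (tseq n) p i x) atTop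
      (nhds (w i * Bspline t p i x)) :=
    (hwconv i).mul (Bspline_tendsto hmult htconv x hx p i)
  -- denominator
  have hDeq : (∑ᶠ ℓ : ℤ, w ℓ * Bspline t p ℓ x)
      = ∑ ℓ ∈ Finset.Icc a b, w ℓ * Bspline t p ℓ x :=
    finsum_eq_sum_of_support_subset _ (support_subset_Icc hmono p x ha hb)
  have hDpos : 0 < ∑ᶠ ℓ : ℤ, w ℓ * Bspline t p ℓ x := by
    rw [hDeq]
    have hone := Bspline_partition hmono p a b x ha hb
    have hex : ∃ ℓ ∈ Finset.Icc a b, Bspline t p ℓ x ≠ 0 := by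
      by_contra hc
      push_neg at hc
      rw [Finset.sum_congr rfl fun ℓ hℓ => hc ℓ hℓ] at hone
      simp at hone
    obtain ⟨ℓ₀, hℓ₀, hne⟩ := hex
    refine Finset.sum_pos' (fun ℓ _ => mul_nonneg (hw ℓ).le (Bspline_nonneg hmono p ℓ x))
      ⟨ℓ₀, hℓ₀, mul_pos (hw ℓ₀)
        (lt_of_le_of_ne (Bspline_nonneg hmono p ℓ₀ x) (Ne.symm hne))⟩
  have hden : Tendsto (fun n => ∑ᶠ ℓ : ℤ, wseq n ℓ * Bspline (tseq n) p ℓ x) atTop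
      (nhds (∑ᶠ ℓ : ℤ, w ℓ * Bspline t p ℓ x)) := by
    have hfin : Tendsto (fun n => ∑ ℓ ∈ Finset.Icc a b, wseq n ℓ * Bspline (tseq n) p ℓ x)
        atTop (nhds (∑ ℓ ∈ Finset.Icc a b, w ℓ * Bspline t p ℓ x)) :=
      tendsto_finset_sum _ fun ℓ _ =>
        (hwconv ℓ).mul (Bspline_tendsto hmult htconv x hx p ℓ)
    rw [hDeq]
    refine hfin.congr' ?_
    filter_upwards [(htconv (a + p)).eventually (eventually_lt_nhds ha),
      (htconv b).eventually (eventually_gt_nhds hb)] with n h1 h2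
    exact (finsum_eq_sum_of_support_subset _
      (support_subset_Icc (hmonoSeq n) p x h1 h2)).symm
  simp only [nurbs]
  exact hnum.div hden (ne_of_gt hDpos)
end

section
/- Let I ⊂ ℝ be a compact interval with nonempty interior, let κ_max ≥ 1, let 0 < w_min ≤ w_max be real numbers, let p ∈ ℕ₀, and let φ : I → ℝ be a piecewise continuously differentiable function with positive infimum (i.e., there exist finitely many points partitioning I such that φ agrees on each open subpiece with a function that is C¹ on the corresponding closed subpiece, and inf_I φ > 0). Then there exists a constant q ∈ (0,1], depending only on κ_max, w_min, w_max, p and φ, with the following property: for all knots t_0 ≤ t_1 ≤ … ≤ t_{3p+1} in I whose distinct values ž_0 < … < ž_m satisfy κ(t_0,…,t_{3p+1}) := max{ (ž_{j+1}−ž_j)/(ž_j−ž_{j−1}), (ž_j−ž_{j−1})/(ž_{j+1}−ž_j) : j = 1,…,m−1 } ≤ κ_max, for all weights w_1, …, w_{2p+1} ∈ [w_min, w_max], and for all ℓ ∈ {p+1, …, 2p+1}, it holds ‖(1 − R(·|t_0,…,t_{3p+1}, w_1,…,w_{2p+1})) · φ‖_{L¹([t_{ℓ−1}, t_ℓ])}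 ≤ (1 − q) ‖φ‖_{L¹([t_{ℓ−1}, t_ℓ])}. -/
open Set MeasureTheory

/-- The NURBS `R(·|t_0,…,t_{3p+1}, w_1,…,w_{2p+1})` determined by `3p+2` knots
(at indices `0,…,3p+1`) and `2p+1` weights (at indices `1,…,2p+1`); i.e.
`R_{p+1,p}` for any extension of the given knots/weights to a bi-infinite
sequence (by locality, the definition does not depend on the extension). -/
noncomputable def RlocNurbs (p : ℕ) (t : ℕ → ℝ) (w : ℕ → ℝ) : ℝ → ℝ :=
  nurbs
    (fun j : ℤ =>
      if j < 0 then t 0 + (j : ℝ)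
      else if (3 * p + 1 : ℤ) < j then t (3 * p + 1) + ((j - (3 * p + 1) : ℤ) : ℝ)
      else t j.toNat)
    (fun j : ℤ => if 1 ≤ j ∧ j ≤ (2 * p + 1 : ℤ) then w j.toNat else 1)
    p (p + 1)

namespace NurbsAux

variable {t : ℤ → ℝ}

lemma bspline_out (ht : Monotone t) (p : ℕ) : ∀ (i : ℤ) (x : ℝ),
    (x < t (i-1) ∨ t (i + p) ≤ x) → Bspline t p i x = 0 := by
  induction p with
  | zero =>
    intro i x h
    simp only [Bspline, Set.mem_Ico, ite_eq_right_iff, one_ne_zero]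
    push_cast at h
    rintro ⟨h1, h2⟩
    rcases h with h | h
    · exact absurd h1 (not_le.mpr h)
    · rw [add_zero] at h; exact absurd h2 (not_lt.mpr h)
  | succ p ih =>
    intro i x h
    have h1 : Bspline t p i x = 0 := by
      apply ih
      rcases h with h | h
      · exact Or.inl h
      · right
        refine le_trans (ht ?_) h
        push_cast; omega
    have h2 : Bspline t p (i+1) x = 0 := by
      apply ih
      rcases h with h | h
      · left
        exact lt_of_lt_of_le h (by apply ht; omega)
      · right
        refine le_of_eq_of_le ?_ h
        congr 1; push_cast; ring
    simp [Bspline, h1, h2]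

lemma term1_nonneg (ht : Monotone t) (p : ℕ) (i : ℤ) (x : ℝ)
    (hB : 0 ≤ Bspline t p i x) :
    0 ≤ bsBeta t (i - 1) (p + 1) x * Bspline t p i x := by
  rcases eq_or_ne (Bspline t p i x) 0 with h0 | h0
  · simp [h0]
  have hx : t (i-1) ≤ x := by
    by_contra hc
    exact h0 (bspline_out ht p i x (Or.inl (not_le.mp hc)))
  apply mul_nonneg _ hB
  unfold bsBeta
  split
  · exact le_refl 0
  · apply div_nonneg (by linarith)
    have := ht (show (i:ℤ) - 1 ≤ i - 1 + ((p:ℕ)+1:ℕ) by push_cast; omega)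
    linarith [this]


lemma term2_nonneg (ht : Monotone t) (p : ℕ) (i : ℤ) (x : ℝ)
    (hB : 0 ≤ Bspline t p (i+1) x) :
    0 ≤ (1 - bsBeta t i (p + 1) x) * Bspline t p (i+1) x := by
  rcases eq_or_ne (Bspline t p (i+1) x) 0 with h0 | h0
  · simp [h0]
  have hx : x < t (i + 1 + p) := by
    by_contra hc
    exact h0 (bspline_out ht p (i+1) x (Or.inr (not_lt.mp hc)))
  have hxx : x < t (i + ((p:ℕ)+1:ℕ)) := by
    refine lt_of_lt_of_le hx (ht ?_); push_cast; omega
  apply mul_nonneg _ hB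
  unfold bsBeta
  split
  · norm_num
  · rename_i hne
    have hle : t i ≤ t (i + ((p:ℕ)+1:ℕ)) := ht (by push_cast; omega)
    have hlt : t i < t (i + ((p:ℕ)+1:ℕ)) := lt_of_le_of_ne hle hne
    have : (x - t i) / (t (i + ((p:ℕ)+1:ℕ)) - t i) < 1 := by
      rw [div_lt_one (by linarith)]; linarith
    linarith

lemma bspline_nonneg (ht : Monotone t) (p : ℕ) : ∀ (i : ℤ) (x : ℝ),
    0 ≤ Bspline t p i x := by
  induction p with
  | zero => intro i x; unfold Bspline; positivity
  | succ p ih =>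
    intro i x
    show 0 ≤ bsBeta t (i - 1) (p + 1) x * Bspline t p i x
      + (1 - bsBeta t i (p + 1) x) * Bspline t p (i + 1) x
    have := term1_nonneg ht p i x (ih i x)
    have := term2_nonneg ht p i x (ih (i+1) x)
    linarith


lemma bspline_support_finite (ht : Monotone t) (p : ℕ) (x : ℝ)
    (htop : ∃ N : ℤ, ∀ i ≥ N, x < t i) (hbot : ∃ M : ℤ, ∀ i ≤ M, t i ≤ x) :
    (Function.support fun i : ℤ => Bspline t p i x).Finite := by
  obtain ⟨N, hN⟩ := htop
  obtain ⟨M, hM⟩ := hbot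
  apply Set.Finite.subset (Set.finite_Icc (M - p + 1) N)
  intro i hi
  simp only [Function.mem_support] at hi
  have h1 : t (i - 1) ≤ x := by
    by_contra hc
    exact hi (bspline_out ht p i x (Or.inl (not_le.mp hc)))
  have h2 : x < t (i + p) := by
    by_contra hc
    exact hi (bspline_out ht p i x (Or.inr (not_lt.mp hc)))
  constructor
  · by_contra hc
    exact absurd (hM (i + p) (by omega)) (not_le.mpr h2)
  · by_contra hc
    exact absurd (hN (i - 1) (by omega)) (not_lt.mpr h1)

lemma bspline_partition (ht : Monotone t) (x : ℝ)
    (htop : ∃ N : ℤ, ∀ i ≥ N, x < t i) (hbot : ∃ M : ℤ, ∀ i ≤ M, t i ≤ x) :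
    ∀ p : ℕ, ∑ᶠ i : ℤ, Bspline t p i x = 1 := by
  intro p
  induction p with
  | zero =>
    obtain ⟨i0, hi0, hleast⟩ := Int.exists_least_of_bdd
      (P := fun i => x < t i)
      (by
        obtain ⟨M, hM⟩ := hbot
        exact ⟨M + 1, fun z hz => by
          by_contra hc
          exact absurd (hM z (by omega)) (not_le.mpr hz)⟩)
      (by obtain ⟨N, hN⟩ := htop; exact ⟨N, hN N le_rfl⟩)
    have hl : t (i0 - 1) ≤ x := by
      by_contra hc
      have := hleast _ (not_le.mp hc)
      omega
    rw [finsum_eq_single _ i0]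
    · simp [Bspline, Set.mem_Ico, hl, hi0]
    · intro j hj
      simp only [Bspline, Set.mem_Ico, ite_eq_right_iff, one_ne_zero]
      rintro ⟨hj1, hj2⟩
      rcases lt_or_gt_of_ne hj with h | h
      · have hnx : ¬ x < t j := fun hc => by have := hleast _ hc; omega
        exact hnx hj2
      · exact absurd (le_trans (ht (show i0 ≤ j - 1 by omega)) hj1) (not_le.mpr hi0)
  | succ p ih =>
    have hfin : (Function.support fun i : ℤ => Bspline t p i x).Finite :=
      bspline_support_finite ht p x htop hbot
    have hf1 : (Function.support fun i : ℤ =>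
        bsBeta t (i - 1) (p + 1) x * Bspline t p i x).Finite := by
      apply hfin.subset
      intro i hi
      simp only [Function.mem_support] at hi ⊢
      exact fun h => hi (by rw [h, mul_zero])
    have hf2 : (Function.support fun i : ℤ =>
        (1 - bsBeta t i (p + 1) x) * Bspline t p (i + 1) x).Finite := by
      apply Set.Finite.subset (hfin.image (fun i => i - 1))
      intro i hi
      simp only [Function.mem_support] at hi
      refine ⟨i + 1, ?_, by simp⟩
      simp only [Function.mem_support]
      exact fun h => hi (by rw [h, mul_zero])
    have step : ∀ i : ℤ, Bspline t (p+1) i x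
        = bsBeta t (i - 1) (p + 1) x * Bspline t p i x
          + (1 - bsBeta t i (p + 1) x) * Bspline t p (i + 1) x := fun i => rfl
    calc ∑ᶠ i : ℤ, Bspline t (p+1) i x
        = (∑ᶠ i : ℤ, bsBeta t (i - 1) (p + 1) x * Bspline t p i x)
          + ∑ᶠ i : ℤ, (1 - bsBeta t i (p + 1) x) * Bspline t p (i + 1) x := by
          rw [← finsum_add_distrib hf1 hf2]
          exact finsum_congr step
      _ = (∑ᶠ i : ℤ, bsBeta t (i - 1) (p + 1) x * Bspline t p i x)
          + ∑ᶠ i : ℤ, (1 - bsBeta t (i - 1) (p + 1) x) * Bspline t p i x := by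
          congr 1
          have := finsum_comp_equiv (Equiv.addRight (1 : ℤ))
            (f := fun i : ℤ => (1 - bsBeta t (i - 1) (p + 1) x) * Bspline t p i x)
          rw [← this]
          apply finsum_congr
          intro i
          simp
      _ = ∑ᶠ i : ℤ, Bspline t p i x := by
          rw [← finsum_add_distrib hf1 ?h2]
          · apply finsum_congr; intro i; ring
          · apply hfin.subset
            intro i hi
            simp only [Function.mem_support] at hi ⊢
            exact fun h => hi (by rw [h, mul_zero])
      _ = 1 := ih


lemma bspline_lower (ht : Monotone t) (p : ℕ) (L : ℤ) (x c : ℝ)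
    (hc0 : 0 < c) (hc1 : c ≤ 1) (hLx : t (L-1) < t L)
    (hx1 : t (L-1) + (t L - t (L-1))/4 ≤ x)
    (hx2 : x ≤ t L - (t L - t (L-1))/4)
    (hden : ∀ a b : ℤ, L - 1 - p ≤ a → b ≤ L + p → a ≤ b →
      c * (t b - t a) ≤ (t L - t (L-1))/4) :
    ∀ k : ℕ, k ≤ p → ∀ i : ℤ, i ≤ L → L ≤ i + k → c ^ k ≤ Bspline t k i x := by
  have hq : 0 < (t L - t (L-1))/4 := by linarith
  intro k
  induction k with
  | zero =>
    intro _ i hi1 hi2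
    have hiL : i = L := by omega
    subst hiL
    have hB1 : Bspline t 0 i x = 1 := by
      unfold Bspline
      rw [if_pos (Set.mem_Ico.mpr ⟨by linarith, by linarith⟩)]
    rw [pow_zero, hB1]
  | succ k ih =>
    intro hkp i hi1 hi2
    have hkp' : k ≤ p := by omega
    have hstep : Bspline t (k+1) i x
        = bsBeta t (i - 1) (k + 1) x * Bspline t k i x
          + (1 - bsBeta t i (k + 1) x) * Bspline t k (i + 1) x := rfl
    rw [hstep]
    by_cases hcase : L ≤ i + k
    · -- stay: use first term
      have hB : c ^ k ≤ Bspline t k i x := ih hkp' i hi1 hcase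
      have hidx : i - 1 + ((k:ℕ)+1:ℕ) = i + k := by push_cast; ring
      have hlo : t (i-1) ≤ t (L-1) := ht (by omega)
      have hhi : t L ≤ t (i - 1 + ((k:ℕ)+1:ℕ)) := by rw [hidx]; exact ht (by omega)
      have hne : t (i-1) ≠ t (i - 1 + ((k:ℕ)+1:ℕ)) := by
        intro hEq; rw [← hEq] at hhi; linarith
      have hdpos : 0 < t (i - 1 + ((k:ℕ)+1:ℕ)) - t (i-1) := by linarith
      have hcoeff : c ≤ bsBeta t (i - 1) (k + 1) x := by
        unfold bsBeta
        rw [if_neg hne, le_div_iff₀ hdpos]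
        have := hden (i-1) (i - 1 + ((k:ℕ)+1:ℕ)) (by omega) (by rw [hidx]; omega)
          (by push_cast; omega)
        linarith
      have h2 : 0 ≤ (1 - bsBeta t i (k + 1) x) * Bspline t k (i + 1) x :=
        term2_nonneg ht k i x (bspline_nonneg ht k (i+1) x)
      have : c * c ^ k ≤ bsBeta t (i - 1) (k + 1) x * Bspline t k i x :=
        mul_le_mul hcoeff hB (by positivity) (by linarith [hq, hcoeff])
      calc c ^ (k+1) = c * c ^ k := by ring
        _ ≤ bsBeta t (i - 1) (k + 1) x * Bspline t k i x := this
        _ ≤ _ := by linarith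
    · -- move: use second term
      have hiL : L = i + k + 1 := by omega
      have hB : c ^ k ≤ Bspline t k (i+1) x := ih hkp' (i+1) (by omega) (by omega)
      have hidx : i + ((k:ℕ)+1:ℕ) = L := by push_cast; omega
      have hcoeff : c ≤ 1 - bsBeta t i (k + 1) x := by
        unfold bsBeta
        split
        · simpa using hc1
        · rename_i hne
          rw [hidx] at hne ⊢
          have hlo : t i ≤ t (L-1) := ht (by omega)
          have hdpos : 0 < t L - t i := by linarith [lt_of_le_of_ne (ht (show i ≤ L by omega)) hne]
          have hd := hden i L (by omega) (by omega) (by omega)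
          have hxu : c * (t L - t i) ≤ t L - x := le_trans hd (by linarith)
          have hdiv : (x - t i) / (t L - t i) ≤ 1 - c := by
            rw [div_le_iff₀ hdpos]
            nlinarith
          linarith
      have h1 : 0 ≤ bsBeta t (i - 1) (k + 1) x * Bspline t k i x :=
        term1_nonneg ht k i x (bspline_nonneg ht k i x)
      have : c * c ^ k ≤ (1 - bsBeta t i (k + 1) x) * Bspline t k (i+1) x :=
        mul_le_mul hcoeff hB (by positivity) (by linarith [hq, hcoeff])
      calc c ^ (k+1) = c * c ^ k := by ring
        _ ≤ (1 - bsBeta t i (k + 1) x) * Bspline t k (i+1) x := this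
        _ ≤ _ := by linarith


lemma nurbs_bounds (ht : Monotone t) (p : ℕ) (x : ℝ)
    (htop : ∃ N : ℤ, ∀ i ≥ N, x < t i) (hbot : ∃ M : ℤ, ∀ i ≤ M, t i ≤ x)
    {w : ℤ → ℝ} {wlo whi : ℝ} (hwlo : 0 < wlo)
    (hw : ∀ i, wlo ≤ w i ∧ w i ≤ whi) (i0 : ℤ) :
    0 ≤ nurbs t w p i0 x ∧ nurbs t w p i0 x ≤ 1 ∧
      w i0 * Bspline t p i0 x / whi ≤ nurbs t w p i0 x := by
  have hfin := bspline_support_finite ht p x htop hbot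
  set s : Finset ℤ := hfin.toFinset with hs
  have hsub : (Function.support fun i : ℤ => w i * Bspline t p i x) ⊆ ↑s := by
    intro i hi
    simp only [Function.mem_support] at hi
    simp only [hs, Set.Finite.coe_toFinset, Function.mem_support]
    exact fun h => hi (by rw [h, mul_zero])
  have hsubB : (Function.support fun i : ℤ => Bspline t p i x) ⊆ ↑s := by
    simp [hs]
  have hD : (∑ᶠ ℓ : ℤ, w ℓ * Bspline t p ℓ x) = ∑ i ∈ s, w i * Bspline t p i x :=
    finsum_eq_finset_sum_of_support_subset _ hsub
  have hsum1 : ∑ i ∈ s, Bspline t p i x = 1 := by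
    rw [← finsum_eq_finset_sum_of_support_subset _ hsubB]
    exact bspline_partition ht x htop hbot p
  have hBnn : ∀ i, 0 ≤ Bspline t p i x := fun i => bspline_nonneg ht p i x
  have hDle : (∑ᶠ ℓ : ℤ, w ℓ * Bspline t p ℓ x) ≤ whi := by
    rw [hD]
    calc ∑ i ∈ s, w i * Bspline t p i x ≤ ∑ i ∈ s, whi * Bspline t p i x := by
          apply Finset.sum_le_sum
          intro i _
          exact mul_le_mul_of_nonneg_right (hw i).2 (hBnn i)
      _ = whi := by rw [← Finset.mul_sum, hsum1, mul_one]
  have hDge : wlo ≤ ∑ᶠ ℓ : ℤ, w ℓ * Bspline t p ℓ x := by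
    rw [hD]
    calc wlo = ∑ i ∈ s, wlo * Bspline t p i x := by rw [← Finset.mul_sum, hsum1, mul_one]
      _ ≤ ∑ i ∈ s, w i * Bspline t p i x := by
          apply Finset.sum_le_sum
          intro i _
          exact mul_le_mul_of_nonneg_right (hw i).1 (hBnn i)
  have hDpos : 0 < ∑ᶠ ℓ : ℤ, w ℓ * Bspline t p ℓ x := lt_of_lt_of_le hwlo hDge
  have hterm : ∀ i, 0 ≤ w i * Bspline t p i x := fun i =>
    mul_nonneg (le_trans hwlo.le (hw i).1) (hBnn i)
  have hnum_le : w i0 * Bspline t p i0 x ≤ ∑ᶠ ℓ : ℤ, w ℓ * Bspline t p ℓ x := by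
    rcases eq_or_ne (Bspline t p i0 x) 0 with h0 | h0
    · rw [h0, mul_zero]; exact hDpos.le
    · rw [hD]
      apply Finset.single_le_sum (fun i _ => hterm i)
      simp only [hs, Set.Finite.mem_toFinset, Function.mem_support]
      exact h0
  unfold nurbs
  refine ⟨div_nonneg (hterm i0) hDpos.le, ?_, ?_⟩
  · rw [div_le_one hDpos]; exact hnum_le
  · exact div_le_div_of_nonneg_left (hterm i0) hDpos hDle


lemma mono_of_step {f : ℕ → ℝ} {n : ℕ} (h : ∀ k < n, f k ≤ f (k+1)) :
    ∀ a b, a ≤ b → b ≤ n → f a ≤ f b := by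
  intro a b hab hbn
  induction b with
  | zero => rw [Nat.le_zero.mp hab]
  | succ b ih =>
    rcases Nat.eq_or_lt_of_le hab with rfl | hlt
    · rfl
    · exact le_trans (ih (by omega) (by omega)) (h b (by omega))

lemma strict_mono_of_step {f : ℕ → ℝ} {n : ℕ} (h : ∀ k < n, f k < f (k+1)) :
    ∀ a b, a < b → b ≤ n → f a < f b := by
  intro a b hab hbn
  induction b with
  | zero => omega
  | succ b ih =>
    rcases Nat.eq_or_lt_of_le (Nat.lt_succ_iff.mp hab) with rfl | hlt
    · exact h a (by omega)
    · exact lt_trans (ih hlt (by omega)) (h b (by omega))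

lemma gap_comparable {κ : ℝ} (hκ : 1 ≤ κ) {m n : ℕ} (tt zc : ℕ → ℝ)
    (hmono : ∀ k < n, tt k ≤ tt (k+1))
    (hzc : ∀ jj < m, zc jj < zc (jj + 1))
    (hset : {x : ℝ | ∃ k ≤ n, tt k = x} = {x : ℝ | ∃ jj ≤ m, zc jj = x})
    (hratio : ∀ jj, 1 ≤ jj → jj < m →
      (zc (jj + 1) - zc jj) / (zc jj - zc (jj - 1)) ≤ κ ∧
      (zc jj - zc (jj - 1)) / (zc (jj + 1) - zc jj) ≤ κ)
    {k k' : ℕ} (hk : k < n) (hk' : k' < n)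
    (h1 : tt k < tt (k+1)) (h2 : tt k' < tt (k'+1)) :
    tt (k'+1) - tt k' ≤ κ ^ (n - 1) * (tt (k+1) - tt k) := by
  have hzmono := strict_mono_of_step hzc
  have hzle : ∀ a b, a ≤ b → b ≤ m → zc a ≤ zc b := by
    intro a b hab hbm
    rcases Nat.eq_or_lt_of_le hab with rfl | hlt
    · rfl
    · exact (hzmono a b hlt hbm).le
  have hκ0 : (0:ℝ) < κ := by linarith
  -- every tt-value is a zc-value and vice versa
  have hdir : ∀ k0 ≤ n, ∃ j ≤ m, zc j = tt k0 := by
    intro k0 hk0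
    have : tt k0 ∈ {x : ℝ | ∃ k ≤ n, tt k = x} := ⟨k0, hk0, rfl⟩
    rw [hset] at this
    exact this
  have hdir2 : ∀ j ≤ m, ∃ k0 ≤ n, tt k0 = zc j := by
    intro j hj
    have : zc j ∈ {x : ℝ | ∃ jj ≤ m, zc jj = x} := ⟨j, hj, rfl⟩
    rw [← hset] at this
    exact this
  -- adjacent knots correspond to adjacent distinct values
  have hadj : ∀ k0, k0 < n → tt k0 < tt (k0+1) →
      ∃ j < m, zc j = tt k0 ∧ zc (j+1) = tt (k0+1) := by
    intro k0 hk0 hlt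
    obtain ⟨j1, hj1m, hj1⟩ := hdir k0 (by omega)
    obtain ⟨j2, hj2m, hj2⟩ := hdir (k0+1) (by omega)
    have hj12 : j1 < j2 := by
      by_contra hc
      have := hzle j2 j1 (by omega) hj1m
      rw [hj1, hj2] at this
      linarith
    have hj1m' : j1 < m := by omega
    obtain ⟨k'', hk''n, hk''⟩ := hdir2 (j1+1) (by omega)
    have hlow : tt k0 < tt k'' := by
      rw [hk'', ← hj1]
      exact hzmono j1 (j1+1) (by omega) (by omega)
    have hkk : k0 + 1 ≤ k'' := by
      by_contra hc
      have := mono_of_step hmono k'' k0 (by omega) (by omega)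
      linarith
    have hup : tt (k0+1) ≤ tt k'' := mono_of_step hmono (k0+1) k'' hkk hk''n
    have hup2 : zc (j1+1) ≤ zc j2 := hzle (j1+1) j2 (by omega) hj2m
    refine ⟨j1, hj1m', hj1, ?_⟩
    rw [hj2] at hup2
    linarith
  -- m ≤ n
  have hmn : m ≤ n := by
    classical
    have hsubset : (Finset.range (m+1)).image zc ⊆ (Finset.range (n+1)).image tt := by
      intro y hy
      simp only [Finset.mem_image, Finset.mem_range] at hy ⊢
      obtain ⟨j, hj, rfl⟩ := hy
      obtain ⟨k0, hk0, hk0'⟩ := hdir2 j (by omega)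
      exact ⟨k0, by omega, hk0'⟩
    have hinj : Set.InjOn zc ↑(Finset.range (m+1)) := by
      intro a ha b hb hab
      simp only [Finset.coe_range, Set.mem_Iio] at ha hb
      by_contra hne
      rcases Nat.lt_or_ge a b with hlt | hge
      · have := hzmono a b hlt (by omega); linarith [hab.le, hab.ge, this]
      · have := hzmono b a (by omega) (by omega)
        rw [hab] at this; linarith
    have h1' := Finset.card_le_card hsubset
    rw [Finset.card_image_of_injOn hinj, Finset.card_range] at h1'
    have h2' := Finset.card_image_le (s := Finset.range (n+1)) (f := tt)
    rw [Finset.card_range] at h2'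
    omega
  -- gap chain
  have hgpos : ∀ j < m, 0 < zc (j+1) - zc j := fun j hj => by linarith [hzc j hj]
  have chain : ∀ d j, j + d < m →
      (zc (j+d+1) - zc (j+d) ≤ κ ^ d * (zc (j+1) - zc j)) ∧
      (zc (j+1) - zc j ≤ κ ^ d * (zc (j+d+1) - zc (j+d))) := by
    intro d
    induction d with
    | zero => intro j hj; simp
    | succ d ih =>
      intro j hj
      obtain ⟨ih1, ih2⟩ := ih j (by omega)
      have hrr := hratio (j+d+1) (by omega) (by omega)
      have e1 : j + d + 1 - 1 = j + d := by omega
      rw [e1] at hrr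
      have hp1 : 0 < zc (j+d+1) - zc (j+d) := hgpos _ (by omega)
      have hp2 : 0 < zc (j+d+1+1) - zc (j+d+1) := hgpos _ (by omega)
      have hr1 : zc (j+d+1+1) - zc (j+d+1) ≤ κ * (zc (j+d+1) - zc (j+d)) := by
        have := hrr.1
        rw [div_le_iff₀ hp1] at this
        linarith
      have hr2 : zc (j+d+1) - zc (j+d) ≤ κ * (zc (j+d+1+1) - zc (j+d+1)) := by
        have := hrr.2
        rw [div_le_iff₀ hp2] at this
        linarith
      have hκd : (0:ℝ) < κ ^ d := by positivity
      constructor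
      · have e2 : j + (d+1) = j + d + 1 := by omega
        rw [e2]
        calc zc (j+d+1+1) - zc (j+d+1) ≤ κ * (zc (j+d+1) - zc (j+d)) := hr1
          _ ≤ κ * (κ ^ d * (zc (j+1) - zc j)) := by nlinarith
          _ = κ ^ (d+1) * (zc (j+1) - zc j) := by ring
      · have e2 : j + (d+1) = j + d + 1 := by omega
        rw [e2]
        calc zc (j+1) - zc j ≤ κ ^ d * (zc (j+d+1) - zc (j+d)) := ih2
          _ ≤ κ ^ d * (κ * (zc (j+d+1+1) - zc (j+d+1))) := by nlinarith
          _ = κ ^ (d+1) * (zc (j+d+1+1) - zc (j+d+1)) := by ring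
  obtain ⟨j, hj, hjz, hjz'⟩ := hadj k hk h1
  obtain ⟨j', hj', hjz2, hjz2'⟩ := hadj k' hk' h2
  have key : zc (j'+1) - zc j' ≤ κ ^ (n-1) * (zc (j+1) - zc j) := by
    rcases le_or_gt j j' with hle | hgt
    · obtain ⟨c1, _⟩ := chain (j' - j) j (by omega)
      have e : j + (j' - j) = j' := by omega
      rw [e] at c1
      have hd : j' - j ≤ n - 1 := by omega
      have : κ ^ (j' - j) ≤ κ ^ (n-1) := pow_le_pow_right₀ hκ hd
      nlinarith [hgpos j hj]
    · obtain ⟨_, c2⟩ := chain (j - j') j' (by omega)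
      have e : j' + (j - j') = j := by omega
      rw [e] at c2
      have hd : j - j' ≤ n - 1 := by omega
      have : κ ^ (j - j') ≤ κ ^ (n-1) := pow_le_pow_right₀ hκ hd
      nlinarith [hgpos j hj]
  rw [hjz, hjz', hjz2, hjz2'] at key
  exact key

end NurbsAux


open NurbsAux in
set_option maxHeartbeats 2000000 in
/-- Lemma 4.3: the key contraction estimate implying assumption (A2) for NURBS
spaces. -/
theorem nurbs_contraction_lemma
    (A B : ℝ) (hAB : A < B) (κmax : ℝ) (hκ : 1 ≤ κmax)
    (wmin wmax : ℝ) (hw0 : 0 < wmin) (hww : wmin ≤ wmax) (p : ℕ)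
    (φ : ℝ → ℝ)
    (hφpw : ∃ (M : ℕ) (σ : ℕ → ℝ), 1 ≤ M ∧ σ 0 = A ∧ σ M = B ∧
      (∀ m < M, σ m < σ (m + 1)) ∧
      (∀ m < M, ∃ g : ℝ → ℝ, ContDiffOn ℝ 1 g (Icc (σ m) (σ (m + 1))) ∧
        ∀ x ∈ Ioo (σ m) (σ (m + 1)), φ x = g x))
    (hφpos : ∃ ε > 0, ∀ x ∈ Icc A B, ε ≤ φ x) :
    ∃ q : ℝ, 0 < q ∧ q ≤ 1 ∧
      ∀ tt : ℕ → ℝ,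
        (∀ k < 3 * p + 1, tt k ≤ tt (k + 1)) →
        (∀ k ≤ 3 * p + 1, tt k ∈ Icc A B) →
        (∃ (m : ℕ) (zc : ℕ → ℝ),
          (∀ jj < m, zc jj < zc (jj + 1)) ∧
          {x : ℝ | ∃ k ≤ 3 * p + 1, tt k = x} = {x : ℝ | ∃ jj ≤ m, zc jj = x} ∧
          ∀ jj, 1 ≤ jj → jj < m →
            (zc (jj + 1) - zc jj) / (zc jj - zc (jj - 1)) ≤ κmax ∧
            (zc jj - zc (jj - 1)) / (zc (jj + 1) - zc jj) ≤ κmax) →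
        ∀ ww : ℕ → ℝ, (∀ k, 1 ≤ k → k ≤ 2 * p + 1 → ww k ∈ Icc wmin wmax) →
        ∀ ℓ, p + 1 ≤ ℓ → ℓ ≤ 2 * p + 1 →
          (∫ x in Icc (tt (ℓ - 1)) (tt ℓ), |(1 - RlocNurbs p tt ww x) * φ x|)
            ≤ (1 - q) * ∫ x in Icc (tt (ℓ - 1)) (tt ℓ), |φ x| := by
  classical
  obtain ⟨ε, hε, hεφ⟩ := hφpos
  obtain ⟨M, σ, hM1, hσ0, hσM, hσs, hpieces⟩ := hφpw
  have hσle := mono_of_step (f := σ) (n := M) (fun k hk => (hσs k hk).le)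
  -- choose the piecewise C¹ functions
  have hgex : ∀ m, ∃ g : ℝ → ℝ, m < M →
      (ContDiffOn ℝ 1 g (Icc (σ m) (σ (m+1))) ∧ ∀ x ∈ Ioo (σ m) (σ (m+1)), φ x = g x) := by
    intro m
    by_cases h : m < M
    · obtain ⟨g, hg1, hg2⟩ := hpieces m h
      exact ⟨g, fun _ => ⟨hg1, hg2⟩⟩
    · exact ⟨0, fun h' => absurd h' h⟩
  choose g hg using hgex
  -- bounds on each piece
  have hCex : ∀ m, ∃ C : ℝ, 0 ≤ C ∧ (m < M → ∀ x ∈ Ioo (σ m) (σ (m+1)), |φ x| ≤ C) := by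
    intro m
    by_cases h : m < M
    · obtain ⟨C, hC⟩ := (isCompact_Icc (a := σ m) (b := σ (m+1))).exists_bound_of_continuousOn
        ((hg m h).1.continuousOn)
      refine ⟨max C 0, le_max_right _ _, fun _ x hx => ?_⟩
      rw [(hg m h).2 x hx]
      exact le_trans (le_of_eq (Real.norm_eq_abs _).symm)
        (le_trans (hC x (Ioo_subset_Icc_self hx)) (le_max_left _ _))
    · exact ⟨0, le_rfl, fun h' => absurd h' h⟩
  choose C hC0 hC using hCex
  set Cφ : ℝ := 1 + ∑ m ∈ Finset.range M, C m with hCφdef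
  have hCφpos : 0 < Cφ :=
    add_pos_of_pos_of_nonneg one_pos (Finset.sum_nonneg fun m _ => hC0 m)
  have hCφbound : ∀ m < M, ∀ x ∈ Ioo (σ m) (σ (m+1)), |φ x| ≤ Cφ := by
    intro m hm x hx
    have h1 := hC m hm x hx
    have h2 : C m ≤ ∑ m ∈ Finset.range M, C m :=
      Finset.single_le_sum (fun i _ => hC0 i) (Finset.mem_range.mpr hm)
    rw [hCφdef]; linarith
  -- constants
  have hκpos : (0:ℝ) < κmax := lt_of_lt_of_le one_pos hκ
  set c0 : ℝ := 1 / (4 * (3*(p:ℝ)+1) * κmax^(3*p)) with hc0def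
  have hc0pos : 0 < c0 := by
    rw [hc0def]
    positivity
  have hκp1 : (1:ℝ) ≤ κmax^(3*p) := one_le_pow₀ hκ
  have hc0le1 : c0 ≤ 1 := by
    rw [hc0def, div_le_one (by positivity)]
    nlinarith [Nat.cast_nonneg (α := ℝ) p]
  set whi : ℝ := max wmax 1 with hwhidef
  have hwhipos : 0 < whi := lt_of_lt_of_le one_pos (le_max_right _ _)
  set wlo : ℝ := min wmin 1 with hwlodef
  have hwlopos : 0 < wlo := lt_min hw0 one_pos
  set r : ℝ := wmin * c0^p / whi with hrdef
  have hrpos : 0 < r := div_pos (mul_pos hw0 (pow_pos hc0pos p)) hwhipos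
  set q : ℝ := min 1 (r * ε / (2 * Cφ)) with hqdef
  have hqpos : 0 < q := lt_min one_pos (by positivity)
  have hq1 : q ≤ 1 := min_le_left _ _
  have hq2 : q ≤ r * ε / (2 * Cφ) := min_le_right _ _
  refine ⟨q, hqpos, hq1, ?_⟩
  intro tt hmono hrange hzcH ww hwrange ℓ hℓ1 hℓ2
  have httmono := mono_of_step (f := tt) (n := 3*p+1) hmono
  have hcd : tt (ℓ - 1) ≤ tt ℓ := httmono (ℓ-1) ℓ (by omega) (by omega)
  set cL := tt (ℓ - 1) with hcLdef
  set dL := tt ℓ with hdLdef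
  have habsnn : 0 ≤ ∫ x in Icc cL dL, |φ x| :=
    integral_nonneg fun x => abs_nonneg _
  by_cases hdeg : dL ≤ cL
  · -- degenerate interval
    have h0 : volume (Icc cL dL) = 0 := by
      rw [Real.volume_Icc]
      exact ENNReal.ofReal_eq_zero.mpr (by linarith)
    rw [Measure.restrict_eq_zero.mpr h0]
    simp only [integral_zero_measure, mul_zero]
    exact le_refl 0
  push_neg at hdeg
  set hlen : ℝ := dL - cL with hhdef
  have hhpos : 0 < hlen := by rw [hhdef]; linarith
  -- extended knot and weight sequences
  set text : ℤ → ℝ := fun j : ℤ =>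
      if j < 0 then tt 0 + (j : ℝ)
      else if (3 * p + 1 : ℤ) < j then tt (3 * p + 1) + ((j - (3 * p + 1) : ℤ) : ℝ)
      else tt j.toNat with htextdef
  set wext : ℤ → ℝ := fun j : ℤ =>
      if 1 ≤ j ∧ j ≤ (2 * p + 1 : ℤ) then ww j.toNat else 1 with hwextdef
  have hRdef : ∀ x, RlocNurbs p tt ww x = nurbs text wext p ((p+1 : ℕ) : ℤ) x :=
    fun x => rfl
  have hins : ∀ k : ℕ, k ≤ 3*p+1 → text (k : ℤ) = tt k := by
    intro k hk
    simp only [htextdef]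
    rw [if_neg (by omega), if_neg (by push_cast; omega)]
    simp
  have htextmono : Monotone text := by
    intro a b hab
    simp only [htextdef]
    rcases lt_or_ge a 0 with ha | ha
    · rw [if_pos ha]
      have ha' : (a:ℝ) ≤ 0 := by exact_mod_cast ha.le
      rcases lt_or_ge b 0 with hb | hb
      · rw [if_pos hb]
        have : (a:ℝ) ≤ (b:ℝ) := by exact_mod_cast hab
        linarith
      · rw [if_neg (not_lt.mpr hb)]
        have h00 : tt 0 ≤ tt (3*p+1) := httmono 0 (3*p+1) (by omega) (by omega)
        split
        · rename_i hb2
          have : (0:ℝ) ≤ ((b - (3*p+1) : ℤ) : ℝ) := by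
            have : (0:ℤ) ≤ b - (3*p+1) := by omega
            exact_mod_cast this
          linarith
        · rename_i hb2
          have : tt 0 ≤ tt b.toNat := httmono 0 b.toNat (by omega) (by omega)
          linarith
    · rw [if_neg (by omega)]
      have hb : (0:ℤ) ≤ b := le_trans ha hab
      rw [if_neg (not_lt.mpr hb)]
      rcases le_or_gt a (3*p+1 : ℤ) with ha2 | ha2
      · rw [if_neg (not_lt.mpr ha2)]
        rcases le_or_gt b (3*p+1 : ℤ) with hb2 | hb2
        · rw [if_neg (not_lt.mpr hb2)]
          exact httmono a.toNat b.toNat (by omega) (by omega)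
        · rw [if_pos hb2]
          have h1 : tt a.toNat ≤ tt (3*p+1) := httmono a.toNat (3*p+1) (by omega) (by omega)
          have h2 : (0:ℝ) ≤ ((b - (3*p+1) : ℤ) : ℝ) := by
            have : (0:ℤ) ≤ b - (3*p+1) := by omega
            exact_mod_cast this
          linarith
      · rw [if_pos ha2, if_pos (by omega)]
        have : ((a - (3*p+1) : ℤ) : ℝ) ≤ ((b - (3*p+1) : ℤ) : ℝ) := by
          have : (a - (3*p+1) : ℤ) ≤ b - (3*p+1) := by omega
          exact_mod_cast this
        linarith
  have htop : ∀ x : ℝ, ∃ N : ℤ, ∀ i ≥ N, x < text i := by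
    intro x
    refine ⟨max (3*p+2 : ℤ) (⌈x - tt (3*p+1)⌉ + 3*p+2), fun i hi => ?_⟩
    have hi1 : (3*p+1 : ℤ) < i := by
      have := le_trans (le_max_left (3*p+2 : ℤ) _) hi
      omega
    have hi2 : ⌈x - tt (3*p+1)⌉ + 3*p+2 ≤ i := le_trans (le_max_right _ _) hi
    simp only [htextdef]
    rw [if_neg (by omega), if_pos hi1]
    have h2 : x - tt (3*p+1) ≤ (⌈x - tt (3*p+1)⌉ : ℝ) := Int.le_ceil _
    have h3 : (⌈x - tt (3*p+1)⌉ : ℝ) + 1 ≤ ((i - (3*p+1) : ℤ) : ℝ) := by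
      have : ⌈x - tt (3*p+1)⌉ + 1 ≤ (i - (3*p+1) : ℤ) := by omega
      exact_mod_cast this
    linarith
  have hbot : ∀ x : ℝ, ∃ N : ℤ, ∀ i ≤ N, text i ≤ x := by
    intro x
    refine ⟨min (-1 : ℤ) ⌊x - tt 0⌋, fun i hi => ?_⟩
    have hi1 : i < 0 := by
      have := le_trans hi (min_le_left _ _)
      omega
    have hi2 : i ≤ ⌊x - tt 0⌋ := le_trans hi (min_le_right _ _)
    simp only [htextdef]
    rw [if_pos hi1]
    have h2 : (⌊x - tt 0⌋ : ℝ) ≤ x - tt 0 := Int.floor_le _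
    have h3 : (i:ℝ) ≤ (⌊x - tt 0⌋ : ℝ) := by exact_mod_cast hi2
    linarith
  have hwbd : ∀ i : ℤ, wlo ≤ wext i ∧ wext i ≤ whi := by
    intro i
    simp only [hwextdef]
    split
    · rename_i hcond
      have := hwrange i.toNat (by omega) (by omega)
      exact ⟨le_trans (min_le_left _ _) this.1, le_trans this.2 (le_max_left _ _)⟩
    · exact ⟨min_le_right _ _, le_max_right _ _⟩
  -- gap comparability
  have hgapb : ∀ k < 3*p+1, tt (k+1) - tt k ≤ κmax^(3*p) * hlen := by
    intro k hk
    rcases eq_or_lt_of_le (hmono k hk) with heq | hlt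
    · rw [← heq]
      have : (0:ℝ) ≤ κmax^(3*p) * hlen := by positivity
      linarith
    · obtain ⟨m, zc, hzc1, hzc2, hzc3⟩ := hzcH
      have hℓlt : ℓ - 1 < 3*p+1 := by omega
      have hℓeq : (ℓ - 1) + 1 = ℓ := by omega
      have hℓgap : tt (ℓ-1) < tt ((ℓ-1)+1) := by rw [hℓeq]; exact hdeg
      have := gap_comparable hκ tt zc hmono hzc1 hzc2 hzc3 hℓlt hk hℓgap hlt
      rw [hℓeq] at this
      have hE : 3*p+1-1 = 3*p := by omega
      rw [hE] at this
      exact this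
  have hspan : ∀ a b : ℤ, 0 ≤ a → a ≤ b → b ≤ (3*p+1 : ℤ) →
      text b - text a ≤ (3*(p:ℝ)+1) * (κmax^(3*p) * hlen) := by
    intro a b ha hab hb
    have h1 : text a ≥ text 0 := htextmono (by omega)
    have h2 : text b ≤ text (3*p+1 : ℤ) := htextmono (by omega)
    have e0 : text (0 : ℤ) = tt 0 := by
      have := hins 0 (by omega); exact_mod_cast this
    have e1 : text (3*p+1 : ℤ) = tt (3*p+1) := by
      have := hins (3*p+1) (by omega); push_cast at this; exact_mod_cast this
    have htel : tt (3*p+1) - tt 0 = ∑ k ∈ Finset.range (3*p+1), (tt (k+1) - tt k) :=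
      (Finset.sum_range_sub tt (3*p+1)).symm
    have hsum : ∑ k ∈ Finset.range (3*p+1), (tt (k+1) - tt k)
        ≤ ∑ _k ∈ Finset.range (3*p+1), κmax^(3*p) * hlen := by
      apply Finset.sum_le_sum
      intro k hk
      exact hgapb k (Finset.mem_range.mp hk)
    rw [Finset.sum_const, Finset.card_range] at hsum
    have : ((3*p+1 : ℕ) : ℝ) = 3*(p:ℝ)+1 := by push_cast; ring
    rw [nsmul_eq_mul, this] at hsum
    linarith
  -- local lower bound on the B-spline
  have hLrw1 : text ((ℓ:ℤ) - 1) = cL := by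
    have : ((ℓ:ℤ) - 1) = ((ℓ - 1 : ℕ) : ℤ) := by omega
    rw [this, hins (ℓ-1) (by omega)]
  have hLrw2 : text (ℓ:ℤ) = tt ℓ := hins ℓ (by omega)
  have hden : ∀ a b : ℤ, (ℓ:ℤ) - 1 - p ≤ a → b ≤ (ℓ:ℤ) + p → a ≤ b →
      c0 * (text b - text a) ≤ (text (ℓ:ℤ) - text ((ℓ:ℤ) - 1))/4 := by
    intro a b ha hb hab
    rw [hLrw1, hLrw2]
    have hsp := hspan a b (by omega) hab (by omega)
    have hkey : c0 * ((3*(p:ℝ)+1) * (κmax^(3*p) * hlen)) = hlen / 4 := by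
      rw [hc0def]
      field_simp
    have : c0 * (text b - text a) ≤ c0 * ((3*(p:ℝ)+1) * (κmax^(3*p) * hlen)) :=
      mul_le_mul_of_nonneg_left hsp hc0pos.le
    rw [hkey] at this
    linarith [this, hhdef, hcLdef, hdLdef]
  have hBlow : ∀ x ∈ Icc (cL + hlen/4) (dL - hlen/4),
      c0^p ≤ Bspline text p ((p+1 : ℕ) : ℤ) x := by
    intro x hx
    have hLx : text ((ℓ:ℤ)-1) < text (ℓ:ℤ) := by rw [hLrw1, hLrw2]; exact hdeg
    apply bspline_lower htextmono p (ℓ:ℤ) x c0 hc0pos hc0le1 hLx ?hx1 ?hx2 hden p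
      le_rfl ((p+1 : ℕ) : ℤ) (by push_cast; omega) (by push_cast; omega)
    case hx1 =>
      rw [hLrw1, hLrw2]
      linarith [hx.1, hhdef, hcLdef, hdLdef]
    case hx2 =>
      rw [hLrw1, hLrw2]
      linarith [hx.2, hhdef, hcLdef, hdLdef]
  -- bounds for the NURBS function
  have hwp : wext ((p+1 : ℕ) : ℤ) = ww (p+1) := by
    simp only [hwextdef]
    rw [if_pos ⟨by omega, by omega⟩]
    simp
  have hwp1 : wmin ≤ ww (p+1) ∧ ww (p+1) ≤ wmax := by
    have := hwrange (p+1) (by omega) (by omega)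
    exact ⟨this.1, this.2⟩
  have hRbnd : ∀ x : ℝ, 0 ≤ RlocNurbs p tt ww x ∧ RlocNurbs p tt ww x ≤ 1 := by
    intro x
    rw [hRdef x]
    have hnb := nurbs_bounds htextmono p x (htop x) (hbot x) hwlopos hwbd ((p+1:ℕ):ℤ)
    exact ⟨hnb.1, hnb.2.1⟩
  have hRlow : ∀ x ∈ Icc (cL + hlen/4) (dL - hlen/4), r ≤ RlocNurbs p tt ww x := by
    intro x hx
    rw [hRdef x]
    have hnb := nurbs_bounds htextmono p x (htop x) (hbot x) hwlopos hwbd ((p+1:ℕ):ℤ)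
    refine le_trans ?_ hnb.2.2
    rw [hwp, hrdef]
    have hnum : wmin * c0^p ≤ ww (p+1) * Bspline text p ((p+1:ℕ):ℤ) x :=
      mul_le_mul hwp1.1 (hBlow x hx) (pow_nonneg hc0pos.le p) (le_trans hw0.le hwp1.1)
    exact (div_le_div_iff_of_pos_right hwhipos).mpr hnum
  -- measurable a.e. representative of φ
  set ψ : ℝ → ℝ := fun x => ∑ m ∈ Finset.range M, (Ioo (σ m) (σ (m+1))).indicator (g m) x
    with hψdef
  have hψmeas : AEMeasurable ψ (volume : Measure ℝ) := by
    apply Finset.aemeasurable_fun_sum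
    intro m hm
    rw [aemeasurable_indicator_iff measurableSet_Ioo]
    exact (((hg m (Finset.mem_range.mp hm)).1.continuousOn).mono
      Ioo_subset_Icc_self).aemeasurable measurableSet_Ioo
  have hfind : ∀ x ∈ Icc A B, (∀ j ≤ M, x ≠ σ j) → ∃ m < M, x ∈ Ioo (σ m) (σ (m+1)) := by
    intro x hx hne
    have hP0 : σ 0 < x := by
      have hσ0x : σ 0 ≤ x := by rw [hσ0]; exact hx.1
      exact lt_of_le_of_ne hσ0x (fun hEq => (hne 0 (by omega)) hEq.symm)
    set m0 := Nat.findGreatest (fun m => σ m < x) M with hm0def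
    have hm0P : σ m0 < x :=
      Nat.findGreatest_spec (P := fun m => σ m < x) (Nat.zero_le M) hP0
    have hm0le : m0 ≤ M := Nat.findGreatest_le M
    have hm0M : m0 < M := by
      rcases eq_or_lt_of_le hm0le with heq | hlt
      · exfalso
        rw [heq] at hm0P
        rw [hσM] at hm0P
        exact absurd hx.2 (not_le.mpr hm0P)
      · exact hlt
    have hnext : ¬ σ (m0+1) < x :=
      Nat.findGreatest_is_greatest (P := fun m => σ m < x) (n := M) (by omega) (by omega)
    exact ⟨m0, hm0M, hm0P,
      lt_of_le_of_ne (not_lt.mp hnext) ((hne (m0+1) (by omega)))⟩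
  have hψval : ∀ x, ∀ m < M, x ∈ Ioo (σ m) (σ (m+1)) → ψ x = φ x := by
    intro x m hm hx
    simp only [hψdef]
    rw [Finset.sum_eq_single_of_mem m (Finset.mem_range.mpr hm)]
    · rw [Set.indicator_of_mem hx, (hg m hm).2 x hx]
    · intro m' hm' hne'
      have hm'M := Finset.mem_range.mp hm'
      rw [Set.indicator_of_notMem]
      intro hx'
      rcases lt_or_gt_of_ne hne' with hlt | hgt
      · have : σ (m'+1) ≤ σ m := hσle (m'+1) m (by omega) (by omega)
        exact absurd (lt_of_lt_of_le hx'.2 (le_trans this hx.1.le)) (lt_irrefl x)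
      · have : σ (m+1) ≤ σ m' := hσle (m+1) m' (by omega) (by omega)
        exact absurd (lt_of_lt_of_le hx.2 (le_trans this hx'.1.le)) (lt_irrefl x)
  have hsubAB : Icc cL dL ⊆ Icc A B :=
    Icc_subset_Icc (hrange (ℓ-1) (by omega)).1 (hrange ℓ (by omega)).2
  have hgood : ∀ᵐ x ∂(volume.restrict (Icc cL dL)), φ x = ψ x ∧ |φ x| ≤ Cφ := by
    rw [ae_iff]
    rw [Measure.restrict_apply' measurableSet_Icc]
    refine measure_mono_null ?_ (Set.Finite.measure_zero ((Set.finite_Iic M).image σ) _)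
    rintro x ⟨hxbad, hxJ⟩
    by_contra hximg
    have hne : ∀ j ≤ M, x ≠ σ j := by
      intro j hj hxe
      exact hximg ⟨j, hj, hxe.symm⟩
    obtain ⟨m, hm, hxm⟩ := hfind x (hsubAB hxJ) hne
    exact hxbad ⟨(hψval x m hm hxm).symm, hCφbound m hm x hxm⟩
  haveI hfinm : IsFiniteMeasure (volume.restrict (Icc cL dL)) := by
    constructor
    rw [Measure.restrict_apply_univ, Real.volume_Icc]
    exact ENNReal.ofReal_lt_top
  have hIntφ : IntegrableOn φ (Icc cL dL) := by
    refine ⟨(hψmeas.restrict.congr ?_).aestronglyMeasurable, ?_⟩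
    · exact hgood.mono fun x hx => hx.1.symm
    · apply MeasureTheory.HasFiniteIntegral.of_bounded (C := Cφ)
      exact hgood.mono fun x hx => by rw [Real.norm_eq_abs]; exact hx.2
  have hIabs : IntegrableOn (fun x => |φ x|) (Icc cL dL) := hIntφ.abs
  set aa : ℝ := cL + hlen/4 with haadef
  set bb : ℝ := dL - hlen/4 with hbbdef
  have hsub' : Icc aa bb ⊆ Icc cL dL :=
    Icc_subset_Icc (by rw [haadef]; linarith) (by rw [hbbdef]; linarith)
  have hIind : IntegrableOn (fun x => (Icc aa bb).indicator (fun y => |φ y|) x)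
      (Icc cL dL) := hIabs.indicator measurableSet_Icc
  have hIf2 : IntegrableOn
      (fun x => |φ x| - r * (Icc aa bb).indicator (fun y => |φ y|) x) (Icc cL dL) :=
    hIabs.sub (hIind.const_mul r)
  have hpt : ∀ x, |(1 - RlocNurbs p tt ww x) * φ x|
      ≤ |φ x| - r * (Icc aa bb).indicator (fun y => |φ y|) x := by
    intro x
    rw [abs_mul]
    by_cases hx : x ∈ Icc aa bb
    · rw [Set.indicator_of_mem hx]
      have h1 := hRlow x hx
      have h2 := (hRbnd x).2
      have h3 : |1 - RlocNurbs p tt ww x| ≤ 1 - r := by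
        rw [abs_of_nonneg (by linarith)]
        linarith
      calc |1 - RlocNurbs p tt ww x| * |φ x| ≤ (1 - r) * |φ x| :=
            mul_le_mul_of_nonneg_right h3 (abs_nonneg _)
        _ = |φ x| - r * |φ x| := by ring
    · rw [Set.indicator_of_notMem hx, mul_zero, sub_zero]
      have h1 := (hRbnd x).1
      have h2 := (hRbnd x).2
      have h3 : |1 - RlocNurbs p tt ww x| ≤ 1 := by
        rw [abs_of_nonneg (by linarith)]
        linarith
      calc |1 - RlocNurbs p tt ww x| * |φ x| ≤ 1 * |φ x| :=
            mul_le_mul_of_nonneg_right h3 (abs_nonneg _)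
        _ = |φ x| := one_mul _
  by_cases hInt : IntegrableOn (fun x => |(1 - RlocNurbs p tt ww x) * φ x|) (Icc cL dL)
  · -- the main case
    have hmain : (∫ x in Icc cL dL, |(1 - RlocNurbs p tt ww x) * φ x|)
        ≤ ∫ x in Icc cL dL, (|φ x| - r * (Icc aa bb).indicator (fun y => |φ y|) x) :=
      integral_mono hInt hIf2 hpt
    have hsplit : (∫ x in Icc cL dL, (|φ x| - r * (Icc aa bb).indicator (fun y => |φ y|) x))
        = (∫ x in Icc cL dL, |φ x|) - r * ∫ x in Icc aa bb, |φ x| := by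
      rw [integral_sub hIabs (hIind.const_mul r), integral_const_mul,
        integral_indicator measurableSet_Icc, Measure.restrict_restrict measurableSet_Icc,
        inter_eq_self_of_subset_left hsub']
    have hlow2 : ε * (hlen/2) ≤ ∫ x in Icc aa bb, |φ x| := by
      have hIab2 : IntegrableOn (fun x => |φ x|) (Icc aa bb) := hIabs.mono_set hsub'
      have hconst : IntegrableOn (fun _ => ε) (Icc aa bb) :=
        (integrableOn_const_iff).mpr (Or.inr (by rw [Real.volume_Icc]; exact ENNReal.ofReal_lt_top))
      have hmono2 : (∫ _x in Icc aa bb, (ε:ℝ)) ≤ ∫ x in Icc aa bb, |φ x| := by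
        apply setIntegral_mono_on hconst hIab2 measurableSet_Icc
        intro x hx
        exact le_trans (hεφ x (hsubAB (hsub' hx))) (le_abs_self _)
      have hba : bb - aa = hlen/2 := by rw [hbbdef, haadef]; ring
      rw [setIntegral_const, Real.volume_real_Icc_of_le (by linarith),
        smul_eq_mul, hba] at hmono2
      linarith
    have hup2 : (∫ x in Icc cL dL, |φ x|) ≤ Cφ * hlen := by
      have hconst : IntegrableOn (fun _ => Cφ) (Icc cL dL) :=
        (integrableOn_const_iff).mpr (Or.inr (by rw [Real.volume_Icc]; exact ENNReal.ofReal_lt_top))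
      have hm3 := integral_mono_ae hIabs hconst (hgood.mono fun x hx => hx.2)
      rw [setIntegral_const, Real.volume_real_Icc_of_le (by linarith),
        smul_eq_mul] at hm3
      have : Cφ * hlen = (dL - cL) * Cφ := by rw [hhdef]; ring
      linarith [hm3, this]
    have e1 : q * (∫ x in Icc cL dL, |φ x|) ≤ q * (Cφ * hlen) :=
      mul_le_mul_of_nonneg_left hup2 hqpos.le
    have e2 : q * (Cφ * hlen) ≤ (r * ε / (2*Cφ)) * (Cφ * hlen) :=
      mul_le_mul_of_nonneg_right hq2 (mul_nonneg hCφpos.le hhpos.le)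
    have e3 : (r * ε / (2*Cφ)) * (Cφ * hlen) = r * (ε * (hlen/2)) := by
      field_simp
    have e4 : r * (ε * (hlen/2)) ≤ r * ∫ x in Icc aa bb, |φ x| :=
      mul_le_mul_of_nonneg_left hlow2 hrpos.le
    calc (∫ x in Icc cL dL, |(1 - RlocNurbs p tt ww x) * φ x|)
        ≤ ∫ x in Icc cL dL, (|φ x| - r * (Icc aa bb).indicator (fun y => |φ y|) x) := hmain
      _ = (∫ x in Icc cL dL, |φ x|) - r * ∫ x in Icc aa bb, |φ x| := hsplit
      _ ≤ (1 - q) * ∫ x in Icc cL dL, |φ x| := by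
          have e5 : q * (∫ x in Icc cL dL, |φ x|) ≤ r * ∫ x in Icc aa bb, |φ x| :=
            le_trans e1 (le_trans e2 (le_trans (le_of_eq e3) e4))
          have e6 : (1 - q) * (∫ x in Icc cL dL, |φ x|)
              = (∫ x in Icc cL dL, |φ x|) - q * (∫ x in Icc cL dL, |φ x|) := by ring
          exact le_trans (sub_le_sub_left e5 _) (le_of_eq e6.symm)
  · rw [integral_undef hInt]
    exact mul_nonneg (by linarith) habsnn
end
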